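/- arXiv:2304.09757 — 4 statements merged into one kernel-verified Lean document; each statement's English description precedes it below -/
import Mathlib

section
/- Let Ω ⊂ ℝ^N be an open set, let q ∈ [1,∞) and let u ∈ BV^q_loc(Ω,ℝ^d). Then there exists a Borel set S ⊂ Ω that is σ-finite with respect to the Hausdorff measure H^{N-1} such that liminf_{ε→0+} ⨍_{B_ε(x)} |u(z) − u_{B_ε(x)}|^q dz = 0 for H^{N-1}-a.e. x ∈ Ω∖S, where u_{B_ε(x)} := ⨍_{B_ε(x)} u(w) dw. Equivalently, the set S''_u is a H^{N-1} σ-finite Borel set. -/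
open MeasureTheory Metric Filter Set Topology
open scoped ENNReal NNReal

noncomputable section

/-- `ℝ^N` as a Euclidean space. -/
abbrev Euc (N : ℕ) : Type := EuclideanSpace ℝ (Fin N)

/-- The average `⨍_s f` of an `ℝ≥0∞`-valued function over a set `s`,
with respect to the Lebesgue measure. -/
def eavg {N : ℕ} (s : Set (Euc N)) (f : Euc N → ℝ≥0∞) : ℝ≥0∞ :=
  (∫⁻ y in s, f y) / volume s

/-- The double integral `∫_Ω ( ∫_{Ω ∩ B_ε(x)} (1/ε^N) |u(x)−u(y)|^q / |x−y| dy ) dx`. -/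
def besovInt (N d : ℕ) (Ω : Set (Euc N)) (u : Euc N → Euc d) (q ε : ℝ) : ℝ≥0∞ :=
  ∫⁻ x in Ω, ∫⁻ y in Ω ∩ ball x ε,
    (‖u x - u y‖₊ : ℝ≥0∞) ^ q / (ENNReal.ofReal (ε ^ N) * (‖x - y‖₊ : ℝ≥0∞))

/-- A set is `σ`-finite with respect to a measure `μ` if it can be covered by countably
many sets of finite `μ`-measure. -/
def SigmaFiniteWrt {N : ℕ} (μ : Measure (Euc N)) (S : Set (Euc N)) : Prop :=
  ∃ T : ℕ → Set (Euc N), S ⊆ (⋃ n, T n) ∧ ∀ n, μ (T n) < ⊤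

/-- The symmetric double integral of `‖v y - v z‖^q` over `(ball x ε)²`. -/
def Dint {N d : ℕ} (v : Euc N → Euc d) (q : ℝ) (x : Euc N) (ε : ℝ) : ℝ≥0∞ :=
  ∫⁻ y in ball x ε, ∫⁻ z in ball x ε, (‖v y - v z‖₊ : ℝ≥0∞) ^ q

/-- Power-mean inequality from Hölder. -/
lemma pow_mean_le {α : Type*} [MeasurableSpace α] (μ : Measure α)
    (hμ0 : μ univ ≠ 0) (hμt : μ univ ≠ ∞) {q : ℝ} (hq : 1 ≤ q)
    {g : α → ℝ≥0∞} (hg : AEMeasurable g μ) :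
    ((∫⁻ a, g a ∂μ) / μ univ) ^ q ≤ (∫⁻ a, g a ^ q ∂μ) / μ univ := by
  rcases eq_or_lt_of_le hq with hq1 | hq1
  · simp [← hq1]
  set m := μ univ with hm
  have key : (∫⁻ a, g a ∂μ) ≤ (∫⁻ a, g a ^ q ∂μ) ^ (1/q) * m ^ (1 - 1/q) := by
    have hpq : q.HolderConjugate q.conjExponent := Real.HolderConjugate.conjExponent hq1
    have h2 := ENNReal.lintegral_mul_le_Lp_mul_Lq μ hpq hg aemeasurable_const (g := fun _ => (1:ℝ≥0∞))
    have hconj : q.conjExponent⁻¹ = 1 - q⁻¹ := by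
      have := hpq.inv_add_inv_eq_one
      linarith
    simp only [ENNReal.one_rpow, lintegral_const, one_mul, mul_one, Pi.mul_apply,
      one_div, hconj] at h2
    simpa [one_div] using h2
  have hq0 : (0:ℝ) ≤ q := le_trans zero_le_one hq
  have hmq0 : m ^ q ≠ 0 := by
    simp [ENNReal.rpow_eq_zero_iff, hμ0, hμt]
  have hmqt : m ^ q ≠ ∞ := by
    simp [ENNReal.rpow_eq_top_iff, hμ0, hμt]
  rw [ENNReal.div_rpow_of_nonneg _ _ hq0]
  calc (∫⁻ a, g a ∂μ) ^ q / m ^ q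
      ≤ ((∫⁻ a, g a ^ q ∂μ) ^ (1/q) * m ^ (1 - 1/q)) ^ q / m ^ q := by
        gcongr
    _ = ((∫⁻ a, g a ^ q ∂μ) * m ^ ((1 - 1/q) * q)) / m ^ q := by
        rw [ENNReal.mul_rpow_of_nonneg _ _ hq0, ← ENNReal.rpow_mul, ← ENNReal.rpow_mul]
        congr 2
        · field_simp; simp
    _ ≤ (∫⁻ a, g a ^ q ∂μ) / m := by
        have hexp : (1 - 1/q) * q = q - 1 := by field_simp
        rw [hexp]
        have : m ^ (q - 1) = m ^ q * m⁻¹ := by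
          rw [← ENNReal.rpow_neg_one m, ← ENNReal.rpow_add _ _ hμ0 hμt]
          ring_nf
        rw [this, div_eq_mul_inv, div_eq_mul_inv]
        calc (∫⁻ a, g a ^ q ∂μ) * (m ^ q * m⁻¹) * (m ^ q)⁻¹
            = (∫⁻ a, g a ^ q ∂μ) * m⁻¹ * (m ^ q * (m ^ q)⁻¹) := by ring
          _ ≤ (∫⁻ a, g a ^ q ∂μ) * m⁻¹ * 1 := by
              gcongr
              exact ENNReal.mul_inv_le_one _
          _ = (∫⁻ a, g a ^ q ∂μ) * m⁻¹ := by ring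

lemma measure_ball_ne_zero' {N : ℕ} (x : Euc N) {ε : ℝ} (hε : 0 < ε) :
    volume (ball x ε) ≠ 0 := (measure_ball_pos volume x hε).ne'

lemma measure_ball_ne_top' {N : ℕ} (x : Euc N) (ε : ℝ) :
    volume (ball x ε) ≠ ∞ := measure_ball_lt_top.ne

lemma enn_diff_avg {N d : ℕ} (v : Euc N → Euc d) {x : Euc N} {ε : ℝ} (hε : 0 < ε)
    (hint : IntegrableOn v (ball x ε)) (z : Euc N) :
    (‖v z - ⨍ w in ball x ε, v w‖₊ : ℝ≥0∞) ≤
      (∫⁻ y in ball x ε, (‖v z - v y‖₊ : ℝ≥0∞)) / volume (ball x ε) := by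
  set B := ball x ε with hB
  have hμB0 : volume B ≠ 0 := measure_ball_ne_zero' x hε
  have hμBt : volume B ≠ ∞ := measure_ball_ne_top' x ε
  have htr : (volume.restrict B) univ = volume B := by
    simp [Measure.restrict_apply_univ]
  have step1 : v z - ⨍ w in B, v w = ⨍ y in B, (v z - v y) := by
    have htoReal : (volume B).toReal ≠ 0 := ENNReal.toReal_ne_zero.mpr ⟨hμB0, hμBt⟩
    rw [average_eq, average_eq, measureReal_def, htr]
    rw [integral_sub (integrableOn_const (C := v z) hμBt) hint]
    rw [setIntegral_const, measureReal_def, smul_sub, smul_smul, inv_mul_cancel₀ htoReal, one_smul]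
  rw [step1, average_eq', htr]
  calc (‖∫ y, (v z - v y) ∂((volume B)⁻¹ • volume.restrict B)‖₊ : ℝ≥0∞)
      ≤ ∫⁻ y, (‖v z - v y‖₊ : ℝ≥0∞) ∂((volume B)⁻¹ • volume.restrict B) :=
        enorm_integral_le_lintegral_enorm _
    _ = (volume B)⁻¹ * ∫⁻ y in B, (‖v z - v y‖₊ : ℝ≥0∞) := lintegral_smul_measure _ _
    _ = (∫⁻ y in B, (‖v z - v y‖₊ : ℝ≥0∞)) / volume B := by
        rw [div_eq_mul_inv, mul_comm]

lemma jensen_ball {N d : ℕ} {q : ℝ} (hq : 1 ≤ q) (v : Euc N → Euc d) (hv : Measurable v)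
    {x : Euc N} {ε : ℝ} (hε : 0 < ε) (hint : IntegrableOn v (ball x ε)) :
    (∫⁻ z in ball x ε, (‖v z - ⨍ w in ball x ε, v w‖₊ : ℝ≥0∞) ^ q)
      ≤ Dint v q x ε / volume (ball x ε) := by
  set B := ball x ε with hB
  have hμB0 : volume B ≠ 0 := measure_ball_ne_zero' x hε
  have hμBt : volume B ≠ ∞ := measure_ball_ne_top' x ε
  have htr : (volume.restrict B) univ = volume B := by
    simp [Measure.restrict_apply_univ]
  have hq0 : (0:ℝ) ≤ q := le_trans zero_le_one hq
  have pointwise : ∀ z, (‖v z - ⨍ w in B, v w‖₊ : ℝ≥0∞) ^ q ≤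
      (∫⁻ y in B, (‖v z - v y‖₊ : ℝ≥0∞) ^ q) / volume B := by
    intro z
    calc (‖v z - ⨍ w in B, v w‖₊ : ℝ≥0∞) ^ q
        ≤ ((∫⁻ y in B, (‖v z - v y‖₊ : ℝ≥0∞)) / volume B) ^ q :=
          ENNReal.rpow_le_rpow (enn_diff_avg v hε hint z) hq0
      _ ≤ (∫⁻ y in B, (‖v z - v y‖₊ : ℝ≥0∞) ^ q) / volume B := by
          have hmeas : Measurable fun y => (‖v z - v y‖₊ : ℝ≥0∞) :=
            (measurable_const.sub hv).nnnorm.coe_nnreal_ennreal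
          have := pow_mean_le (volume.restrict B) (by rw [htr]; exact hμB0)
            (by rw [htr]; exact hμBt) hq hmeas.aemeasurable
          rw [htr] at this
          exact this
  calc (∫⁻ z in B, (‖v z - ⨍ w in B, v w‖₊ : ℝ≥0∞) ^ q)
      ≤ ∫⁻ z in B, (∫⁻ y in B, (‖v z - v y‖₊ : ℝ≥0∞) ^ q) / volume B :=
        lintegral_mono pointwise
    _ = (∫⁻ z in B, ∫⁻ y in B, (‖v z - v y‖₊ : ℝ≥0∞) ^ q) / volume B := by
        simp only [div_eq_mul_inv]
        exact lintegral_mul_const' _ _ (by simpa using hμB0)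
    _ = Dint v q x ε / volume B := rfl

lemma lintegral_eq_indicator_one_mul {α : Type*} [MeasurableSpace α] (μ : Measure α)
    {s : Set α} (hs : MeasurableSet s) (f : α → ℝ≥0∞) :
    ∫⁻ y in s, f y ∂μ = ∫⁻ y, (s.indicator (fun _ => (1:ℝ≥0∞)) y) * f y ∂μ := by
  rw [← lintegral_indicator hs]
  apply lintegral_congr; intro y
  by_cases hy : y ∈ s <;> simp [hy]

lemma measurable_Dint {N d : ℕ} (v : Euc N → Euc d) (hv : Measurable v) (q ε : ℝ) :
    Measurable (fun x => Dint v q x ε) := by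
  classical
  set s : Set (Euc N × Euc N) := {p | dist p.2 p.1 < ε} with hs
  have hsm : MeasurableSet s :=
    measurableSet_lt (measurable_snd.dist measurable_fst) measurable_const
  have hind : ∀ x y : Euc N, (ball x ε).indicator (fun _ => (1:ℝ≥0∞)) y
      = s.indicator (fun _ => (1:ℝ≥0∞)) (x, y) := by
    intro x y
    by_cases hy : y ∈ ball x ε
    · rw [Set.indicator_of_mem hy, Set.indicator_of_mem (by simpa [hs, mem_ball] using hy)]
    · rw [Set.indicator_of_notMem hy, Set.indicator_of_notMem (by simpa [hs, mem_ball] using hy)]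
  have hrw : (fun x => Dint v q x ε) = fun x => ∫⁻ y,
      (s.indicator (fun _ => (1:ℝ≥0∞)) (x, y)) *
        ∫⁻ z, (s.indicator (fun _ => (1:ℝ≥0∞)) (x, z)) * (‖v y - v z‖₊ : ℝ≥0∞) ^ q := by
    funext x
    unfold Dint
    rw [lintegral_eq_indicator_one_mul volume measurableSet_ball]
    apply lintegral_congr; intro y
    rw [hind]
    congr 1
    rw [lintegral_eq_indicator_one_mul volume measurableSet_ball]
    apply lintegral_congr; intro z
    rw [hind]
  rw [hrw]
  have hin : Measurable fun p : Euc N × Euc N =>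
      ∫⁻ z, (s.indicator (fun _ => (1:ℝ≥0∞)) (p.1, z)) * (‖v p.2 - v z‖₊ : ℝ≥0∞) ^ q := by
    apply Measurable.lintegral_prod_right'
      (f := fun w : (Euc N × Euc N) × Euc N =>
        (s.indicator (fun _ => (1:ℝ≥0∞)) (w.1.1, w.2)) * (‖v w.1.2 - v w.2‖₊ : ℝ≥0∞) ^ q)
    apply Measurable.mul
    · exact (measurable_one.indicator hsm).comp
        ((measurable_fst.comp measurable_fst).prodMk measurable_snd)
    · exact (((hv.comp (measurable_snd.comp measurable_fst)).sub
        (hv.comp measurable_snd)).nnnorm.coe_nnreal_ennreal).pow_const q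
  apply Measurable.lintegral_prod_right'
    (f := fun p : Euc N × Euc N => (s.indicator (fun _ => (1:ℝ≥0∞)) p) *
      ∫⁻ z, (s.indicator (fun _ => (1:ℝ≥0∞)) (p.1, z)) * (‖v p.2 - v z‖₊ : ℝ≥0∞) ^ q)
  exact (measurable_one.indicator hsm).mul hin

lemma sum_Dint_le_besov {N d : ℕ} {q : ℝ} (v : Euc N → Euc d)
    (V : Set (Euc N)) {ε : ℝ} (hε : 0 < ε)
    (w : Finset (Euc N)) (hdisj : (↑w : Set (Euc N)).PairwiseDisjoint (fun b => ball b ε))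
    (hsub : ∀ b ∈ w, ball b (2*ε) ⊆ V) :
    ∑ b ∈ w, Dint v q b ε ≤
      ENNReal.ofReal ((2*ε)^N * (2*ε)) * besovInt N d V v q (2*ε) := by
  have h2ε : (0:ℝ) < 2*ε := by linarith
  set c : ℝ≥0∞ := ENNReal.ofReal ((2*ε)^N * (2*ε)) with hc
  have hc0 : c ≠ 0 := by
    simp only [hc, ne_eq, ENNReal.ofReal_eq_zero, not_le]
    positivity
  have hct : c ≠ ∞ := ENNReal.ofReal_ne_top
  set G : Euc N → ℝ≥0∞ := fun y => ∫⁻ z in V ∩ ball y (2*ε),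
      (‖v y - v z‖₊ : ℝ≥0∞) ^ q / (ENNReal.ofReal ((2*ε)^N) * (‖y - z‖₊ : ℝ≥0∞)) with hG
  have step : ∀ b ∈ w, Dint v q b ε ≤ ∫⁻ y in ball b ε, c * G y := by
    intro b hb
    unfold Dint
    apply setLIntegral_mono' measurableSet_ball
    intro y hy
    have hsub1 : ball b ε ⊆ V ∩ ball y (2*ε) := by
      intro z hz
      refine ⟨hsub b hb (ball_subset_ball (by linarith) hz), ?_⟩
      have h1 : dist z y ≤ dist z b + dist b y := dist_triangle _ _ _
      have hyb : dist y b < ε := mem_ball.mp hy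
      have hzb : dist z b < ε := mem_ball.mp hz
      have hby : dist b y = dist y b := dist_comm _ _
      rw [mem_ball]
      linarith
    calc (∫⁻ z in ball b ε, (‖v y - v z‖₊ : ℝ≥0∞) ^ q)
        ≤ ∫⁻ z in ball b ε, c * ((‖v y - v z‖₊ : ℝ≥0∞) ^ q /
            (ENNReal.ofReal ((2*ε)^N) * (‖y - z‖₊ : ℝ≥0∞))) := by
          apply setLIntegral_mono' measurableSet_ball
          intro z hz
          have hD : ENNReal.ofReal ((2*ε)^N) * (‖y - z‖₊ : ℝ≥0∞) ≤ c := by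
            rw [hc, ENNReal.ofReal_mul (by positivity)]
            apply mul_le_mul_right
            rw [show ((‖y - z‖₊ : ℝ≥0∞)) = ENNReal.ofReal ‖y - z‖ from (ofReal_norm _).symm]
            apply ENNReal.ofReal_le_ofReal
            have h1 : dist y z ≤ dist y b + dist b z := dist_triangle _ _ _
            have hyb : dist y b < ε := mem_ball.mp hy
            have hzb : dist z b < ε := mem_ball.mp hz
            have hbz : dist b z = dist z b := dist_comm _ _
            rw [← dist_eq_norm]
            linarith
          calc (‖v y - v z‖₊ : ℝ≥0∞) ^ q
              = c * ((‖v y - v z‖₊ : ℝ≥0∞) ^ q / c) := (ENNReal.mul_div_cancel hc0 hct).symm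
            _ ≤ c * ((‖v y - v z‖₊ : ℝ≥0∞) ^ q /
                (ENNReal.ofReal ((2*ε)^N) * (‖y - z‖₊ : ℝ≥0∞))) :=
                mul_le_mul_right (ENNReal.div_le_div_left hD _) c
      _ ≤ ∫⁻ z in V ∩ ball y (2*ε), c * ((‖v y - v z‖₊ : ℝ≥0∞) ^ q /
            (ENNReal.ofReal ((2*ε)^N) * (‖y - z‖₊ : ℝ≥0∞))) := lintegral_mono_set hsub1
      _ = c * G y := by
          rw [hG]
          exact lintegral_const_mul' _ _ hct
  calc ∑ b ∈ w, Dint v q b ε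
      ≤ ∑ b ∈ w, ∫⁻ y in ball b ε, c * G y := Finset.sum_le_sum step
    _ = ∫⁻ y in ⋃ b ∈ w, ball b ε, c * G y := by
        rw [lintegral_biUnion_finset hdisj (fun b _ => measurableSet_ball)]
    _ ≤ ∫⁻ y in V, c * G y := by
        apply lintegral_mono_set
        intro y hy
        simp only [mem_iUnion] at hy
        obtain ⟨b, hb, hyb⟩ := hy
        exact hsub b hb (ball_subset_ball (by linarith) hyb)
    _ = c * besovInt N d V v q (2*ε) := lintegral_const_mul' _ _ hct

lemma haus_finite_of_Dint_lb {N d : ℕ} {q : ℝ} (hN : 1 ≤ N)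
    (v : Euc N → Euc d) (V : Set (Euc N)) (M : ℝ≥0∞) (hM : M ≠ ⊤)
    (hbesov : ∀ ε : ℝ, ε ∈ Ioo (0:ℝ) 1 → besovInt N d V v q ε ≤ M)
    (A : Set (Euc N)) (k : ℕ) {εb : ℝ} (hεb : 0 < εb) (hεb1 : εb ≤ 1/4)
    (hball : ∀ x ∈ A, ∀ ε : ℝ, ε ∈ Ioo (0:ℝ) εb → ball x (2*ε) ⊆ V)
    (hA : ∀ x ∈ A, ∀ ε : ℚ, (ε:ℝ) ∈ Ioo (0:ℝ) εb →
      ((k:ℝ≥0∞)+1)⁻¹ * (volume (ball x (ε:ℝ)))^2 ≤ Dint v q x (ε:ℝ)) :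
    μH[(N:ℝ)-1] A < ⊤ := by
  haveI : Nonempty (Fin N) := ⟨⟨0, hN⟩⟩
  set ω : ℝ≥0∞ := volume (ball (0 : Euc N) 1) with hω
  have hω0 : ω ≠ 0 := measure_ball_ne_zero' _ one_pos
  have hωt : ω ≠ ∞ := measure_ball_ne_top' _ _
  have hvol : ∀ (x : Euc N) (r : ℝ), 0 ≤ r →
      volume (ball x r) = ENNReal.ofReal (r^N) * ω := by
    intro x r hr
    simpa [finrank_euclideanSpace_fin] using Measure.addHaar_ball volume x hr
  set C : ℝ≥0∞ :=
    (ENNReal.ofReal ((2:ℝ)^N * 2 * 8^(N-1)) * M) / (((k:ℝ≥0∞)+1)⁻¹ * ω^2) with hC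
  have hCt : C < ⊤ := by
    apply ENNReal.div_lt_top
    · exact ENNReal.mul_ne_top ENNReal.ofReal_ne_top hM
    · simp [hω0]
  have key : ∀ ε : ℚ, (ε:ℝ) ∈ Ioo (0:ℝ) εb → ∃ s : Finset (Euc N),
      (A ⊆ ⋃ b ∈ s, closedBall b (4*(ε:ℝ))) ∧
      ((s.card : ℝ≥0∞) * ENNReal.ofReal ((8*(ε:ℝ))^(N-1)) ≤ C) := by
    intro ε hε
    have hε0 : (0:ℝ) < ε := hε.1
    obtain ⟨u, huA, hdisj, hcov⟩ :=
      Vitali.exists_disjoint_subfamily_covering_enlargement_closedBall A id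
        (fun _ => (ε:ℝ)) (ε:ℝ) (fun _ _ => le_rfl) 4 (by norm_num)
    set X : ℝ≥0∞ := ((k:ℝ≥0∞)+1)⁻¹ * (ENNReal.ofReal ((ε:ℝ)^N) * ω)^2 with hX
    have hofR0 : ENNReal.ofReal ((ε:ℝ)^N) ≠ 0 := fun h =>
      absurd (ENNReal.ofReal_eq_zero.mp h) (not_le.mpr (pow_pos hε0 N))
    have hX0 : X ≠ 0 := by
      rw [hX]
      exact mul_ne_zero (by simp) (pow_ne_zero _ (mul_ne_zero hofR0 hω0))
    have hXt : X ≠ ∞ := by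
      apply ENNReal.mul_ne_top
      · simp
      · exact ENNReal.pow_ne_top (ENNReal.mul_ne_top ENNReal.ofReal_ne_top hωt)
    set R : ℝ≥0∞ := ENNReal.ofReal ((2*(ε:ℝ))^N * (2*(ε:ℝ))) * M with hR
    have hRt : R ≠ ∞ := ENNReal.mul_ne_top ENNReal.ofReal_ne_top hM
    have hcard : ∀ w : Finset (Euc N), (↑w : Set (Euc N)) ⊆ u →
        (w.card : ℝ≥0∞) * X ≤ R := by
      intro w hw
      have h1 : ∀ b ∈ w, X ≤ Dint v q b (ε:ℝ) := by
        intro b hb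
        have hbA : b ∈ A := huA (hw hb)
        have := hA b hbA ε hε
        rwa [hvol b (ε:ℝ) hε0.le] at this
      have h2 : w.card • X ≤ ∑ b ∈ w, Dint v q b (ε:ℝ) :=
        Finset.card_nsmul_le_sum w _ X h1
      have h3 : ∑ b ∈ w, Dint v q b (ε:ℝ) ≤
          ENNReal.ofReal ((2*(ε:ℝ))^N * (2*(ε:ℝ))) * besovInt N d V v q (2*(ε:ℝ)) := by
        apply sum_Dint_le_besov v V hε0 w
        · exact (hdisj.subset hw).mono (fun b => ball_subset_closedBall)
        · intro b hb
          exact hball b (huA (hw hb)) (ε:ℝ) hε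
      have h4 : besovInt N d V v q (2*(ε:ℝ)) ≤ M := by
        apply hbesov
        constructor
        · linarith
        · have := hε.2; linarith
      calc (w.card : ℝ≥0∞) * X = w.card • X := (nsmul_eq_mul _ _).symm
        _ ≤ ∑ b ∈ w, Dint v q b (ε:ℝ) := h2
        _ ≤ ENNReal.ofReal ((2*(ε:ℝ))^N * (2*(ε:ℝ))) * besovInt N d V v q (2*(ε:ℝ)) := h3
        _ ≤ R := by rw [hR]; exact mul_le_mul_right h4 _
    have hufin : u.Finite := by
      rw [← Set.not_infinite]
      intro hinf
      obtain ⟨n, hn⟩ := ENNReal.exists_nat_gt (show R / X ≠ ∞ from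
        (ENNReal.div_lt_top hRt hX0).ne)
      obtain ⟨w, hwu, hwcard⟩ := hinf.exists_subset_card_eq n
      have hle := hcard w hwu
      rw [hwcard] at hle
      have : (n:ℝ≥0∞) ≤ R / X := (ENNReal.le_div_iff_mul_le (Or.inl hX0) (Or.inl hXt)).2 hle
      exact absurd this (not_le.mpr hn)
    refine ⟨hufin.toFinset, ?_, ?_⟩
    · intro a ha
      obtain ⟨b, hbu, hsub⟩ := hcov a ha
      simp only [mem_iUnion, exists_prop]
      exact ⟨b, by simpa using hbu, hsub (mem_closedBall_self hε0.le)⟩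
    · have hle := hcard hufin.toFinset (by simp)
      have hle2 : (hufin.toFinset.card : ℝ≥0∞) ≤ R / X :=
        (ENNReal.le_div_iff_mul_le (Or.inl hX0) (Or.inl hXt)).2 hle
      have he0 : ENNReal.ofReal ((ε:ℝ)^(2*N)) ≠ 0 := fun h =>
        absurd (ENNReal.ofReal_eq_zero.mp h) (not_le.mpr (pow_pos hε0 (2*N)))
      have hmain : (R / X) * ENNReal.ofReal ((8*(ε:ℝ))^(N-1)) ≤ C := by
        have hXeq : X = (((k:ℝ≥0∞)+1)⁻¹ * ω^2) * ENNReal.ofReal ((ε:ℝ)^(2*N)) := by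
          rw [hX, mul_pow, ← ENNReal.ofReal_pow (by positivity), ← pow_mul, mul_comm N 2]
          ring
        have hexp : (2*(ε:ℝ))^N * (2*(ε:ℝ)) * (8*(ε:ℝ))^(N-1)
            = (2:ℝ)^N * 2 * 8^(N-1) * (ε:ℝ)^(2*N) := by
          have hNe : N + 1 + (N-1) = 2*N := by omega
          rw [mul_pow, mul_pow]
          have hpow : (ε:ℝ)^N * (ε:ℝ) * (ε:ℝ)^(N-1) = (ε:ℝ)^(2*N) := by
            rw [← pow_succ, ← pow_add, hNe]
          calc (2:ℝ)^N * (ε:ℝ)^N * (2*(ε:ℝ)) * ((8:ℝ)^(N-1) * (ε:ℝ)^(N-1))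
              = (2:ℝ)^N * 2 * 8^(N-1) * ((ε:ℝ)^N * (ε:ℝ) * (ε:ℝ)^(N-1)) := by ring
            _ = (2:ℝ)^N * 2 * 8^(N-1) * (ε:ℝ)^(2*N) := by rw [hpow]
        have hReq : R * ENNReal.ofReal ((8*(ε:ℝ))^(N-1)) =
            (ENNReal.ofReal ((2:ℝ)^N * 2 * 8^(N-1)) * M) * ENNReal.ofReal ((ε:ℝ)^(2*N)) := by
          rw [hR, mul_right_comm, ← ENNReal.ofReal_mul (by positivity), hexp,
            ENNReal.ofReal_mul (by positivity), mul_right_comm]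
        have hdiv : (R / X) * ENNReal.ofReal ((8*(ε:ℝ))^(N-1)) =
            (R * ENNReal.ofReal ((8*(ε:ℝ))^(N-1))) / X := by
          rw [div_eq_mul_inv, div_eq_mul_inv]; ring
        rw [hdiv, hReq, hXeq, hC]
        exact le_of_eq (ENNReal.mul_div_mul_right _ _ he0 ENNReal.ofReal_ne_top)
      calc (hufin.toFinset.card : ℝ≥0∞) * ENNReal.ofReal ((8*(ε:ℝ))^(N-1))
          ≤ (R / X) * ENNReal.ofReal ((8*(ε:ℝ))^(N-1)) := mul_le_mul_left hle2 _
        _ ≤ C := hmain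
  have hscale : ∀ n : ℕ, ∃ ε : ℚ, (0:ℝ) < (ε:ℝ) ∧ (ε:ℝ) < εb ∧ (ε:ℝ) < 1/((n:ℝ)+1) := by
    intro n
    have hpos : (0:ℝ) < min εb (1/((n:ℝ)+1)) := lt_min hεb (by positivity)
    obtain ⟨ε, h1, h2⟩ := exists_rat_btwn hpos
    refine ⟨ε, by exact_mod_cast h1, lt_of_lt_of_le h2 (min_le_left _ _),
      lt_of_lt_of_le h2 (min_le_right _ _)⟩
  choose εs hεs0 hεsb hεsn using hscale
  have hkey : ∀ n : ℕ, ∃ s : Finset (Euc N),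
      (A ⊆ ⋃ b ∈ s, closedBall b (4*((εs n):ℝ))) ∧
      ((s.card : ℝ≥0∞) * ENNReal.ofReal ((8*((εs n):ℝ))^(N-1)) ≤ C) :=
    fun n => key (εs n) ⟨hεs0 n, hεsb n⟩
  choose sn hcovn hboundn using hkey
  have hhaus := Measure.hausdorffMeasure_le_liminf_sum ((N:ℝ)-1) A
    (l := atTop) (fun n : ℕ => ENNReal.ofReal (8*(1/((n:ℝ)+1))))
    ?hr (fun (n : ℕ) (i : sn n) => closedBall (i : Euc N) (4*((εs n):ℝ))) ?ht ?hst
  case hr =>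
    have h0 : Tendsto (fun n : ℕ => 8*(1/((n:ℝ)+1))) atTop (𝓝 (8*0)) :=
      tendsto_one_div_add_atTop_nhds_zero_nat.const_mul 8
    rw [mul_zero] at h0
    have := ENNReal.tendsto_ofReal h0
    simpa using this
  case ht =>
    apply Eventually.of_forall
    intro n i
    have h4ε : (0:ℝ) ≤ 4*((εs n):ℝ) := by have := hεs0 n; linarith
    calc EMetric.diam (closedBall (i : Euc N) (4*((εs n):ℝ)))
        ≤ 2 * ENNReal.ofReal (4*((εs n):ℝ)) := by
          rw [← Metric.emetric_closedBall h4ε]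
          exact EMetric.diam_closedBall
      _ ≤ ENNReal.ofReal (8*(1/((n:ℝ)+1))) := by
          rw [show (2:ℝ≥0∞) = ENNReal.ofReal 2 by simp, ← ENNReal.ofReal_mul (by norm_num)]
          apply ENNReal.ofReal_le_ofReal
          have := (hεsn n).le
          nlinarith [hεs0 n]
  case hst =>
    apply Eventually.of_forall
    intro n a ha
    have h := hcovn n ha
    simp only [mem_iUnion, exists_prop] at h
    obtain ⟨b, hb, hab⟩ := h
    exact mem_iUnion.mpr ⟨⟨b, hb⟩, hab⟩
  refine lt_of_le_of_lt hhaus (lt_of_le_of_lt ?_ hCt)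
  apply Filter.liminf_le_of_frequently_le ?freq ?bdd
  case bdd => exact ⟨⊥, Filter.eventually_map.mpr (Eventually.of_forall fun _ => bot_le)⟩
  apply Frequently.of_forall
  intro n
  have hd0 : (0:ℝ) ≤ (N:ℝ)-1 := by
    have h1 : (1:ℝ) ≤ (N:ℝ) := by exact_mod_cast hN
    linarith
  have hterm : ∀ i : sn n, EMetric.diam (closedBall (i : Euc N) (4*((εs n):ℝ))) ^ ((N:ℝ)-1)
      ≤ ENNReal.ofReal ((8*((εs n):ℝ))^(N-1)) := by
    intro i
    have h4ε : (0:ℝ) ≤ 4*((εs n):ℝ) := by have := hεs0 n; linarith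
    have hdiam : EMetric.diam (closedBall (i : Euc N) (4*((εs n):ℝ)))
        ≤ ENNReal.ofReal (8*((εs n):ℝ)) := by
      calc EMetric.diam (closedBall (i : Euc N) (4*((εs n):ℝ)))
          ≤ 2 * ENNReal.ofReal (4*((εs n):ℝ)) := by
            rw [← Metric.emetric_closedBall h4ε]
            exact EMetric.diam_closedBall
        _ = ENNReal.ofReal (8*((εs n):ℝ)) := by
            rw [show (2:ℝ≥0∞) = ENNReal.ofReal 2 by simp, ← ENNReal.ofReal_mul (by norm_num)]
            congr 1; ring
    calc EMetric.diam (closedBall (i : Euc N) (4*((εs n):ℝ))) ^ ((N:ℝ)-1)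
        ≤ (ENNReal.ofReal (8*((εs n):ℝ))) ^ ((N:ℝ)-1) :=
          ENNReal.rpow_le_rpow hdiam hd0
      _ = ENNReal.ofReal ((8*((εs n):ℝ))^(N-1)) := by
          rw [show ((N:ℝ)-1) = ((N-1 : ℕ):ℝ) by
            rw [Nat.cast_sub hN]; norm_num]
          rw [ENNReal.rpow_natCast, ENNReal.ofReal_pow (by have := hεs0 n; linarith)]
  calc ∑ i : sn n, EMetric.diam (closedBall (i : Euc N) (4*((εs n):ℝ))) ^ ((N:ℝ)-1)
      ≤ ∑ _i : sn n, ENNReal.ofReal ((8*((εs n):ℝ))^(N-1)) :=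
        Finset.sum_le_sum (fun i _ => hterm i)
    _ = ((sn n).card : ℝ≥0∞) * ENNReal.ofReal ((8*((εs n):ℝ))^(N-1)) := by
        rw [Finset.sum_const, Finset.card_univ, Fintype.card_coe, nsmul_eq_mul]
    _ ≤ C := hboundn n

section exhaustion
variable {N : ℕ}

def Kset (Ω : Set (Euc N)) (j : ℕ) : Set (Euc N) :=
  closedBall 0 ((j:ℝ)+1) ∩ {x | ENNReal.ofReal (1/((j:ℝ)+1)) ≤ EMetric.infEdist x Ωᶜ}

def Vset (Ω : Set (Euc N)) (j : ℕ) : Set (Euc N) :=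
  ball 0 ((j:ℝ)+2) ∩ {x | ENNReal.ofReal (1/(3*((j:ℝ)+1))) < EMetric.infEdist x Ωᶜ}

lemma Kset_closed (Ω : Set (Euc N)) (j : ℕ) : IsClosed (Kset Ω j) :=
  (Metric.isClosed_closedBall).inter (isClosed_le continuous_const EMetric.continuous_infEdist)

lemma Kset_measurable (Ω : Set (Euc N)) (j : ℕ) : MeasurableSet (Kset Ω j) :=
  (Kset_closed Ω j).measurableSet

lemma Kset_compact (Ω : Set (Euc N)) (j : ℕ) : IsCompact (Kset Ω j) :=
  (isCompact_closedBall 0 ((j:ℝ)+1)).of_isClosed_subset (Kset_closed Ω j) inter_subset_left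

lemma Kset_subset (Ω : Set (Euc N)) (hΩ : IsOpen Ω) (j : ℕ) : Kset Ω j ⊆ Ω := by
  rintro x ⟨-, hx⟩
  have hpos : 0 < EMetric.infEdist x Ωᶜ :=
    lt_of_lt_of_le (by simp [ENNReal.ofReal_pos]; positivity) hx
  have := EMetric.infEdist_pos_iff_notMem_closure.mp hpos
  rw [hΩ.isClosed_compl.closure_eq] at this
  simpa using this

lemma Kset_covers (Ω : Set (Euc N)) (hΩ : IsOpen Ω) : Ω ⊆ ⋃ j, Kset Ω j := by
  intro x hx
  have hpos : 0 < EMetric.infEdist x Ωᶜ := by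
    apply EMetric.infEdist_pos_iff_notMem_closure.mpr
    rw [hΩ.isClosed_compl.closure_eq]
    simpa using hx
  obtain ⟨n, hn⟩ := ENNReal.exists_inv_nat_lt hpos.ne'
  set j := max n ⌈‖x‖⌉₊ with hj
  refine mem_iUnion.mpr ⟨j, ⟨?_, ?_⟩⟩
  · rw [mem_closedBall, dist_zero_right]
    calc ‖x‖ ≤ (⌈‖x‖⌉₊ : ℝ) := Nat.le_ceil _
      _ ≤ (j:ℝ) := by exact_mod_cast Nat.le_max_right n ⌈‖x‖⌉₊
      _ ≤ (j:ℝ)+1 := by linarith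
  · show ENNReal.ofReal (1/((j:ℝ)+1)) ≤ _
    refine le_trans ?_ hn.le
    rw [ENNReal.ofReal_div_of_pos (by positivity), ENNReal.ofReal_one]
    rw [show ENNReal.ofReal ((j:ℝ)+1) = ((j:ℕ):ℝ≥0∞) + 1 by
      rw [ENNReal.ofReal_add (by positivity) zero_le_one]
      simp [ENNReal.ofReal_natCast]]
    rw [one_div]
    apply ENNReal.inv_le_inv.mpr
    calc (n : ℝ≥0∞) ≤ (j : ℝ≥0∞) := by exact_mod_cast Nat.le_max_left n ⌈‖x‖⌉₊
      _ ≤ (j : ℝ≥0∞) + 1 := le_self_add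

lemma Vset_open (Ω : Set (Euc N)) (j : ℕ) : IsOpen (Vset Ω j) :=
  isOpen_ball.inter (isOpen_lt continuous_const EMetric.continuous_infEdist)

lemma Vset_closure_subset (Ω : Set (Euc N)) (hΩ : IsOpen Ω) (j : ℕ) :
    closure (Vset Ω j) ⊆ Ω := by
  intro x hx
  have h1 : x ∈ closure (ball (0:Euc N) ((j:ℝ)+2)) ∩
      closure {y : Euc N | ENNReal.ofReal (1/(3*((j:ℝ)+1))) < EMetric.infEdist y Ωᶜ} :=
    ⟨closure_mono inter_subset_left hx, closure_mono inter_subset_right hx⟩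
  have h2 : x ∈ {y : Euc N | ENNReal.ofReal (1/(3*((j:ℝ)+1))) ≤ EMetric.infEdist y Ωᶜ} := by
    have hcl : IsClosed {y : Euc N |
        ENNReal.ofReal (1/(3*((j:ℝ)+1))) ≤ EMetric.infEdist y Ωᶜ} :=
      isClosed_le continuous_const EMetric.continuous_infEdist
    have hsub : closure {y : Euc N | ENNReal.ofReal (1/(3*((j:ℝ)+1))) <
        EMetric.infEdist y Ωᶜ} ⊆ {y : Euc N | ENNReal.ofReal (1/(3*((j:ℝ)+1))) ≤
        EMetric.infEdist y Ωᶜ} :=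
      hcl.closure_subset_iff.mpr (fun y hy => by
        simp only [mem_setOf_eq] at hy ⊢
        exact le_of_lt hy)
    exact hsub h1.2
  have hpos : 0 < EMetric.infEdist x Ωᶜ :=
    lt_of_lt_of_le (by simp [ENNReal.ofReal_pos]; positivity) h2
  have := EMetric.infEdist_pos_iff_notMem_closure.mp hpos
  rw [hΩ.isClosed_compl.closure_eq] at this
  simpa using this

lemma Vset_closure_compact (Ω : Set (Euc N)) (j : ℕ) : IsCompact (closure (Vset Ω j)) := by
  apply (isCompact_closedBall (0:Euc N) ((j:ℝ)+2)).of_isClosed_subset isClosed_closure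
  calc closure (Vset Ω j) ⊆ closure (ball (0:Euc N) ((j:ℝ)+2)) :=
        closure_mono inter_subset_left
    _ ⊆ closedBall 0 ((j:ℝ)+2) := closure_ball_subset_closedBall

lemma Vset_bounded_measure (Ω : Set (Euc N)) (j : ℕ) : volume (Vset Ω j) < ⊤ :=
  lt_of_le_of_lt (measure_mono inter_subset_left) measure_ball_lt_top

/-- the scale bound -/
def epsb (j k : ℕ) : ℝ := min (1/(4*((j:ℝ)+1))) (1/((k:ℝ)+1))

lemma epsb_pos (j k : ℕ) : 0 < epsb j k := lt_min (by positivity) (by positivity)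

lemma epsb_le (j k : ℕ) : epsb j k ≤ 1/4 := by
  refine le_trans (min_le_left _ _) ?_
  rw [div_le_div_iff₀ (by positivity) (by norm_num)]
  nlinarith [Nat.cast_nonneg (α := ℝ) j]

lemma ball_subset_Vset {Ω : Set (Euc N)} {j k : ℕ} {x : Euc N} (hx : x ∈ Kset Ω j)
    {ε : ℝ} (hε : ε ∈ Ioo (0:ℝ) (epsb j k)) : ball x (2*ε) ⊆ Vset Ω j := by
  have hεu : ε < 1/(4*((j:ℝ)+1)) := lt_of_lt_of_le hε.2 (min_le_left _ _)
  have hδ2 : 2*ε < 1/(2*((j:ℝ)+1)) := by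
    have hj1 : (0:ℝ) < (j:ℝ)+1 := by positivity
    have h : (1:ℝ)/(2*((j:ℝ)+1)) = 2*(1/(4*((j:ℝ)+1))) := by field_simp; ring
    rw [h]; linarith
  intro y hy
  have hdist : dist y x < 2*ε := mem_ball.mp hy
  obtain ⟨hx1, hx2⟩ := hx
  constructor
  · rw [mem_ball, dist_zero_right] at *
    have hx1' : dist x (0:Euc N) ≤ (j:ℝ)+1 := mem_closedBall.mp hx1
    have : dist y (0:Euc N) ≤ dist y x + dist x 0 := dist_triangle _ _ _
    simp only [dist_zero_right] at hx1' this
    have hj0 : (0:ℝ) ≤ (j:ℝ) := Nat.cast_nonneg j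
    have h12 : 1/(2*((j:ℝ)+1)) ≤ 1 := by
      rw [div_le_one (by positivity)]; linarith
    show ‖y‖ < (j:ℝ)+2
    linarith
  · show ENNReal.ofReal (1/(3*((j:ℝ)+1))) < EMetric.infEdist y Ωᶜ
    have hx2' : ENNReal.ofReal (1/((j:ℝ)+1)) ≤ EMetric.infEdist x Ωᶜ := hx2
    have htri : EMetric.infEdist x Ωᶜ ≤ EMetric.infEdist y Ωᶜ + edist x y :=
      EMetric.infEdist_le_infEdist_add_edist
    have hed : edist x y ≤ ENNReal.ofReal (1/(2*((j:ℝ)+1))) := by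
      rw [edist_dist]
      apply ENNReal.ofReal_le_ofReal
      rw [dist_comm]
      linarith
    have h1 : ENNReal.ofReal (1/((j:ℝ)+1)) ≤
        EMetric.infEdist y Ωᶜ + ENNReal.ofReal (1/(2*((j:ℝ)+1))) :=
      le_trans hx2' (le_trans htri (add_le_add_right hed _))
    have h2 : ENNReal.ofReal (1/((j:ℝ)+1)) - ENNReal.ofReal (1/(2*((j:ℝ)+1))) ≤
        EMetric.infEdist y Ωᶜ := tsub_le_iff_right.mpr h1
    rw [← ENNReal.ofReal_sub _ (by positivity)] at h2
    refine lt_of_lt_of_le ?_ h2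
    apply ENNReal.ofReal_lt_ofReal_iff_of_nonneg (by positivity) |>.mpr
    have heq : (1:ℝ)/((j:ℝ)+1) - 1/(2*((j:ℝ)+1)) = 1/(2*((j:ℝ)+1)) := by
      field_simp; ring
    rw [heq]
    apply one_div_lt_one_div_of_lt (by positivity)
    nlinarith [Nat.cast_nonneg (α := ℝ) j]
end exhaustion

/-- Let `Ω ⊆ ℝ^N` be open, `q ∈ [1,∞)` and `u ∈ BV^q_loc(Ω, ℝ^d)`
(i.e. `u ∈ L^q_loc(Ω)` and `u ∈ BV^q(Ω₀)` for every open `Ω₀` compactly contained in `Ω`).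
Then there exists a Borel set `S` which is `σ`-finite with respect to `H^{N−1}` such that
`liminf_{ε→0+} ⨍_{B_ε(x)} |u(z) − u_{B_ε(x)}|^q dz = 0` for `H^{N−1}`-a.e. `x ∈ Ω ∖ S`. -/
theorem fine_property_BVq_loc
    {N d : ℕ} {q : ℝ} (hq : 1 ≤ q)
    {Ω : Set (Euc N)} (hΩ : IsOpen Ω) (u : Euc N → Euc d)
    (huLqloc : ∀ K : Set (Euc N), IsCompact K → K ⊆ Ω →
      MemLp u (ENNReal.ofReal q) (volume.restrict K))
    (huBVloc : ∀ Ω₀ : Set (Euc N), IsOpen Ω₀ → IsCompact (closure Ω₀) → closure Ω₀ ⊆ Ω →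
      MemLp u (ENNReal.ofReal q) (volume.restrict Ω₀) ∧
        (⨆ ε ∈ Ioo (0:ℝ) 1, besovInt N d Ω₀ u q ε) < ⊤) :
    ∃ S : Set (Euc N), MeasurableSet S ∧ SigmaFiniteWrt (μH[(N : ℝ) - 1]) S ∧
      ∀ᵐ x ∂((μH[(N : ℝ) - 1]).restrict (Ω \ S)),
        liminf (fun ε => eavg (ball x ε) fun z =>
            (‖u z - ⨍ w in ball x ε, u w‖₊ : ℝ≥0∞) ^ q) (𝓝[>] (0:ℝ)) = 0 := by
  rcases Nat.eq_zero_or_pos N with hN0 | hN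
  · -- trivial case N = 0
    subst hN0
    haveI hsub : Subsingleton (Euc 0) := ⟨fun a b => by ext i; exact i.elim0⟩
    refine ⟨∅, MeasurableSet.empty, ⟨fun _ => ∅, by simp, fun n => by simp⟩, ?_⟩
    apply (ae_restrict_mem (hΩ.measurableSet.diff MeasurableSet.empty)).mono
    intro x _
    have hev : ∀ᶠ ε in 𝓝[>] (0:ℝ),
        (eavg (ball x ε) fun z => (‖u z - ⨍ w in ball x ε, u w‖₊ : ℝ≥0∞) ^ q) = 0 := by
      filter_upwards [self_mem_nhdsWithin] with ε hε
      replace hε : (0:ℝ) < ε := hε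
      haveI : IsFiniteMeasure (volume.restrict (ball x ε)) :=
        ⟨by rw [Measure.restrict_apply_univ]; exact measure_ball_lt_top⟩
      haveI : NeZero (volume.restrict (ball x ε)) :=
        ⟨fun h => (measure_ball_ne_zero' x hε) (Measure.restrict_eq_zero.mp h)⟩
      have hu : u = fun _ => u x := funext fun z => by rw [Subsingleton.elim z x]
      have hz : ∀ z, (‖u z - ⨍ w in ball x ε, u w‖₊ : ℝ≥0∞) ^ q = 0 := by
        intro z
        rw [hu, average_const]
        simp [ENNReal.zero_rpow_of_pos (lt_of_lt_of_le one_pos hq)]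
      unfold eavg
      simp only [hz, lintegral_zero, ENNReal.zero_div]
    rw [liminf_congr hev, liminf_const]
  · -- main case N ≥ 1
    haveI : Nonempty (Fin N) := ⟨⟨0, hN⟩⟩
    have hcover := Kset_covers Ω hΩ
    -- measurable representative
    have hu_aesm : AEStronglyMeasurable u (volume.restrict Ω) := by
      have h1 : ∀ j : ℕ, AEStronglyMeasurable u (volume.restrict (Kset Ω j)) := fun j =>
        (huLqloc (Kset Ω j) (Kset_compact Ω j) (Kset_subset Ω hΩ j)).1
      have h2 : AEStronglyMeasurable u (Measure.sum (fun j => volume.restrict (Kset Ω j))) :=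
        AEStronglyMeasurable.sum_measure h1
      apply h2.mono_measure
      calc volume.restrict Ω ≤ volume.restrict (⋃ j, Kset Ω j) :=
            Measure.restrict_mono hcover le_rfl
        _ ≤ Measure.sum (fun j => volume.restrict (Kset Ω j)) := Measure.restrict_iUnion_le
    set v : Euc N → Euc d := hu_aesm.mk u with hvdef
    have hv_sm : StronglyMeasurable v := hu_aesm.stronglyMeasurable_mk
    have hv : Measurable v := hv_sm.measurable
    have huv : u =ᵐ[volume.restrict Ω] v := hu_aesm.ae_eq_mk
    -- Besov sup constants
    have hBV := fun j : ℕ => huBVloc (Vset Ω j) (Vset_open Ω j)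
      (Vset_closure_compact Ω j) (Vset_closure_subset Ω hΩ j)
    set Mj : ℕ → ℝ≥0∞ := fun j => ⨆ ε ∈ Ioo (0:ℝ) 1, besovInt N d (Vset Ω j) u q ε with hMj
    have hMjt : ∀ j, Mj j ≠ ⊤ := fun j => ((hBV j).2).ne
    have hVsubΩ : ∀ j, Vset Ω j ⊆ Ω := fun j =>
      subset_trans subset_closure (Vset_closure_subset Ω hΩ j)
    have huvV : ∀ j, u =ᵐ[volume.restrict (Vset Ω j)] v := fun j =>
      ae_restrict_of_ae_restrict_of_subset (hVsubΩ j) huv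
    have hbesov_eq : ∀ (j : ℕ) (ε : ℝ),
        besovInt N d (Vset Ω j) v q ε = besovInt N d (Vset Ω j) u q ε := by
      intro j ε
      unfold besovInt
      apply lintegral_congr_ae
      filter_upwards [huvV j] with x hx
      refine lintegral_congr_ae ?_
      have h2 : u =ᵐ[volume.restrict (Vset Ω j ∩ ball x ε)] v :=
        ae_restrict_of_ae_restrict_of_subset inter_subset_left (huvV j)
      filter_upwards [h2] with y hy
      rw [hx, hy]
    have hbesov : ∀ j : ℕ, ∀ ε : ℝ, ε ∈ Ioo (0:ℝ) 1 →
        besovInt N d (Vset Ω j) v q ε ≤ Mj j := by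
      intro j ε hε
      rw [hbesov_eq]
      exact le_biSup _ hε
    -- integrability of v on the V sets
    have hvint : ∀ j, IntegrableOn v (Vset Ω j) volume := by
      intro j
      haveI : IsFiniteMeasure (volume.restrict (Vset Ω j)) :=
        ⟨by rw [Measure.restrict_apply_univ]; exact Vset_bounded_measure Ω j⟩
      have h2 : Integrable u (volume.restrict (Vset Ω j)) := (hBV j).1.integrable (by
        rw [show (1:ℝ≥0∞) = ENNReal.ofReal 1 by simp]
        exact ENNReal.ofReal_le_ofReal hq)
      exact h2.congr (huvV j)
    -- bad sets
    set Aset : ℕ → ℕ → Set (Euc N) := fun j k => Kset Ω j ∩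
      ⋂ (ε : ℚ) (_ : (ε:ℝ) ∈ Ioo (0:ℝ) (epsb j k)),
        {x | ((k:ℝ≥0∞)+1)⁻¹ * (volume (ball x (ε:ℝ)))^2 ≤ Dint v q x (ε:ℝ)} with hAset
    have hAmeas : ∀ j k, MeasurableSet (Aset j k) := by
      intro j k
      apply (Kset_measurable Ω j).inter
      apply MeasurableSet.iInter; intro ε
      apply MeasurableSet.iInter; intro hε
      have hvolc : ∀ x : Euc N, volume (ball x (ε:ℝ)) = volume (ball (0:Euc N) (ε:ℝ)) :=
        fun x => Measure.addHaar_ball_center volume x (ε:ℝ)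
      have hre : {x : Euc N | ((k:ℝ≥0∞)+1)⁻¹ * (volume (ball x (ε:ℝ)))^2 ≤ Dint v q x (ε:ℝ)}
          = {x | ((k:ℝ≥0∞)+1)⁻¹ * (volume (ball (0:Euc N) (ε:ℝ)))^2 ≤ Dint v q x (ε:ℝ)} := by
        ext x; simp only [mem_setOf_eq]; rw [hvolc x]
      rw [hre]
      exact measurableSet_le measurable_const (measurable_Dint v hv q (ε:ℝ))
    set S : Set (Euc N) := ⋃ j, ⋃ k, Aset j k with hS
    have hSmeas : MeasurableSet S :=
      MeasurableSet.iUnion fun j => MeasurableSet.iUnion fun k => hAmeas j k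
    have hAfin : ∀ j k, μH[(N:ℝ)-1] (Aset j k) < ⊤ := by
      intro j k
      apply haus_finite_of_Dint_lb hN v (Vset Ω j) (Mj j) (hMjt j) (hbesov j)
        (Aset j k) k (epsb_pos j k) (epsb_le j k)
      · intro x hx ε hε
        exact ball_subset_Vset hx.1 hε
      · intro x hx ε hε
        have h2 := hx.2
        simp only [mem_iInter, mem_setOf_eq] at h2
        exact h2 ε hε
    refine ⟨S, hSmeas,
      ⟨fun n => Aset (Nat.unpair n).1 (Nat.unpair n).2, ?_, fun n => hAfin _ _⟩, ?_⟩
    · intro x hx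
      simp only [hS, mem_iUnion] at hx ⊢
      obtain ⟨j, k, h⟩ := hx
      exact ⟨Nat.pair j k, by simpa [Nat.unpair_pair] using h⟩
    apply (ae_restrict_mem (hΩ.measurableSet.diff hSmeas)).mono
    rintro x ⟨hxΩ, hxS⟩
    obtain ⟨r₀, hr₀, hr₀sub⟩ := Metric.isOpen_iff.mp hΩ x hxΩ
    have hev : ∀ᶠ ε in 𝓝[>] (0:ℝ),
        (eavg (ball x ε) fun z => (‖u z - ⨍ w in ball x ε, u w‖₊ : ℝ≥0∞) ^ q) =
        (eavg (ball x ε) fun z => (‖v z - ⨍ w in ball x ε, v w‖₊ : ℝ≥0∞) ^ q) := by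
      filter_upwards [Ioo_mem_nhdsGT_of_mem (show (0:ℝ) ∈ Ico (0:ℝ) r₀ from
        ⟨le_refl 0, hr₀⟩)] with ε hε
      have hballΩ : ball x ε ⊆ Ω := subset_trans (ball_subset_ball hε.2.le) hr₀sub
      have hae : u =ᵐ[volume.restrict (ball x ε)] v :=
        ae_restrict_of_ae_restrict_of_subset hballΩ huv
      have havg : (⨍ w in ball x ε, u w) = ⨍ w in ball x ε, v w := average_congr hae
      unfold eavg
      congr 1
      apply lintegral_congr_ae
      filter_upwards [hae] with z hz
      rw [hz, havg]
    rw [liminf_congr hev]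
    by_contra hne
    apply hxS
    obtain ⟨j, hxK⟩ := mem_iUnion.mp (hcover hxΩ)
    have hpos : 0 < liminf (fun ε => eavg (ball x ε) fun z =>
        (‖v z - ⨍ w in ball x ε, v w‖₊ : ℝ≥0∞) ^ q) (𝓝[>] (0:ℝ)) :=
      pos_iff_ne_zero.mpr hne
    obtain ⟨c, hc0, hcL⟩ := exists_between hpos
    have hev2 : ∀ᶠ ε in 𝓝[>] (0:ℝ), c < eavg (ball x ε) fun z =>
        (‖v z - ⨍ w in ball x ε, v w‖₊ : ℝ≥0∞) ^ q :=
      eventually_lt_of_lt_liminf hcL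
    obtain ⟨δ, hδIoi, hδsub⟩ := mem_nhdsGT_iff_exists_Ioo_subset.mp hev2
    replace hδIoi : (0:ℝ) < δ := hδIoi
    obtain ⟨n₀, hn₀⟩ := ENNReal.exists_inv_nat_lt hc0.ne'
    set k := max n₀ ⌈1/δ⌉₊ with hk
    have hkc : ((k:ℝ≥0∞)+1)⁻¹ ≤ c := by
      refine le_trans ?_ hn₀.le
      apply ENNReal.inv_le_inv.mpr
      calc (n₀:ℝ≥0∞) ≤ (k:ℝ≥0∞) := by exact_mod_cast Nat.le_max_left _ _
        _ ≤ (k:ℝ≥0∞)+1 := le_self_add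
    have hkδ : 1/((k:ℝ)+1) ≤ δ := by
      have h1 : 1/δ ≤ ((k:ℝ)+1) := by
        calc (1:ℝ)/δ ≤ (⌈1/δ⌉₊:ℝ) := Nat.le_ceil _
          _ ≤ (k:ℝ) := by exact_mod_cast Nat.le_max_right n₀ _
          _ ≤ (k:ℝ)+1 := by linarith
      rw [div_le_iff₀ (by positivity)]
      rw [div_le_iff₀ hδIoi] at h1
      calc (1:ℝ) ≤ ((k:ℝ)+1)*δ := h1
        _ = δ*((k:ℝ)+1) := mul_comm _ _
    refine mem_iUnion.mpr ⟨j, mem_iUnion.mpr ⟨k, ⟨hxK, ?_⟩⟩⟩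
    simp only [mem_iInter, mem_setOf_eq]
    intro ε hε
    have hε0 : (0:ℝ) < ε := hε.1
    have hεδ : (ε:ℝ) < δ :=
      lt_of_lt_of_le (lt_of_lt_of_le hε.2 (min_le_right _ _)) hkδ
    have hcev : c < eavg (ball x (ε:ℝ)) fun z =>
        (‖v z - ⨍ w in ball x (ε:ℝ), v w‖₊ : ℝ≥0∞) ^ q := hδsub ⟨hε0, hεδ⟩
    have hint : IntegrableOn v (ball x (ε:ℝ)) volume :=
      (hvint j).mono_set (subset_trans (ball_subset_ball (by linarith))
        (ball_subset_Vset hxK hε))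
    have hJ := jensen_ball hq v hv hε0 hint
    have hB0 : volume (ball x (ε:ℝ)) ≠ 0 := measure_ball_ne_zero' x hε0
    have hBt : volume (ball x (ε:ℝ)) ≠ ∞ := measure_ball_ne_top' x (ε:ℝ)
    have hdivdiv : Dint v q x (ε:ℝ) / volume (ball x (ε:ℝ)) / volume (ball x (ε:ℝ))
        = Dint v q x (ε:ℝ) / (volume (ball x (ε:ℝ)))^2 := by
      rw [pow_two, div_eq_mul_inv, div_eq_mul_inv, div_eq_mul_inv,
        ENNReal.mul_inv (Or.inl hB0) (Or.inr hB0), mul_assoc]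
    have heavg_le : (eavg (ball x (ε:ℝ)) fun z =>
        (‖v z - ⨍ w in ball x (ε:ℝ), v w‖₊ : ℝ≥0∞) ^ q)
          ≤ Dint v q x (ε:ℝ) / (volume (ball x (ε:ℝ)))^2 := by
      unfold eavg
      calc (∫⁻ z in ball x (ε:ℝ), (‖v z - ⨍ w in ball x (ε:ℝ), v w‖₊ : ℝ≥0∞) ^ q) /
            volume (ball x (ε:ℝ))
          ≤ (Dint v q x (ε:ℝ) / volume (ball x (ε:ℝ))) / volume (ball x (ε:ℝ)) :=
            ENNReal.div_le_div_right hJ _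
        _ = Dint v q x (ε:ℝ) / (volume (ball x (ε:ℝ)))^2 := hdivdiv
    have h1 : c ≤ Dint v q x (ε:ℝ) / (volume (ball x (ε:ℝ)))^2 :=
      le_trans hcev.le heavg_le
    have h2 : c * (volume (ball x (ε:ℝ)))^2 ≤ Dint v q x (ε:ℝ) :=
      (ENNReal.le_div_iff_mul_le (Or.inl (pow_ne_zero 2 hB0))
        (Or.inl (ENNReal.pow_ne_top hBt))).mp h1
    exact le_trans (mul_le_mul_left hkc _) h2
end
end

section
/- Let Ω ⊂ ℝ^N be an open set, let q ∈ [1,∞) and r ∈ (0,1), let u ∈ W^{r,q}_loc(Ω,ℝ^d) and let K ⊂ Ω be a compact set. Then for every ε > 0 there exists a compact set B ⊂ K such that L^N(K∖B) < ε and the restriction of u to B is Hölder continuous with exponent r, i.e. u ∈ C^{0,r}(B,ℝ^d). -/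
open MeasureTheory Metric Filter Set Topology
open scoped ENNReal NNReal

noncomputable section

/-- `u ∈ W^{r,q}(Ω, ℝ^d)`: `u ∈ L^q(Ω)` and the Gagliardo seminorm is finite. -/
def MemFracSobolev (N d : ℕ) (Ω : Set (Euc N)) (u : Euc N → Euc d) (r q : ℝ) : Prop :=
  MemLp u (ENNReal.ofReal q) (volume.restrict Ω) ∧
    (∫⁻ x in Ω, ∫⁻ y in Ω,
        (‖u x - u y‖₊ : ℝ≥0∞) ^ q / (‖x - y‖₊ : ℝ≥0∞) ^ ((N : ℝ) + r * q)) < ⊤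

/-- Let `Ω ⊆ ℝ^N` be open, `q ∈ [1,∞)`, `r ∈ (0,1)`,
`u ∈ W^{r,q}_loc(Ω, ℝ^d)` and `K ⊆ Ω` compact. Then for every `ε > 0` there exists a compact
set `B ⊆ K` with `L^N(K ∖ B) < ε` such that `u` restricted to `B` is `r`-Hölder continuous. -/
theorem lusin_approx_fractional_sobolev
    {N d : ℕ} {q r : ℝ} (hq : 1 ≤ q) (hr0 : 0 < r) (hr1 : r < 1)
    {Ω : Set (Euc N)} (hΩ : IsOpen Ω) (u : Euc N → Euc d)
    (hu : ∀ Ω₀ : Set (Euc N), IsOpen Ω₀ → IsCompact (closure Ω₀) → closure Ω₀ ⊆ Ω →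
      MemFracSobolev N d Ω₀ u r q)
    (K : Set (Euc N)) (hK : IsCompact K) (hKΩ : K ⊆ Ω) :
    ∀ ε : ℝ, 0 < ε → ∃ B : Set (Euc N), IsCompact B ∧ B ⊆ K ∧
      volume (K \ B) < ENNReal.ofReal ε ∧
      ∃ C : ℝ≥0, HolderOnWith C ⟨r, hr0.le⟩ u B := by
  intro ε hε
  have hq0 : (0:ℝ) < q := lt_of_lt_of_le one_pos hq
  set s : ℝ := (N : ℝ) + r * q with hs_def
  have hs0 : 0 < s := by positivity
  -- geometry: an intermediate open set Ω₀ with compact closure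
  obtain ⟨δ, hδ, hth⟩ := hK.exists_thickening_subset_open hΩ hKΩ
  set Ω₀ : Set (Euc N) := Metric.thickening (δ/2) K with hΩ₀_def
  have hΩ₀open : IsOpen Ω₀ := isOpen_thickening
  have hΩ₀meas : MeasurableSet Ω₀ := hΩ₀open.measurableSet
  have hclos : closure Ω₀ ⊆ Ω := by
    refine (closure_thickening_subset_cthickening _ _).trans ?_
    exact (cthickening_subset_thickening' hδ (by linarith) K).trans hth
  have hcomp : IsCompact (closure Ω₀) := by
    refine (hK.cthickening (r := δ/2)).of_isClosed_subset isClosed_closure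
      (closure_thickening_subset_cthickening _ _)
  have hKΩ₀ : K ⊆ Ω₀ := self_subset_thickening (by linarith) K
  have hball : ∀ x ∈ K, ball x (δ/2) ⊆ Ω₀ := fun x hx => ball_subset_thickening hx _
  -- the fractional Sobolev data on Ω₀
  obtain ⟨hmem, hgag⟩ := hu Ω₀ hΩ₀open hcomp hclos
  obtain ⟨v, hv_sm, hv_ae⟩ := hmem.1
  have hv_meas : Measurable v := hv_sm.measurable
  -- the bad null set
  set Z : Set (Euc N) := toMeasurable volume ({x | u x ≠ v x} ∩ Ω₀) with hZ_def
  have hZ_meas : MeasurableSet Z := measurableSet_toMeasurable _ _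
  have hZ_null : volume Z = 0 := by
    rw [measure_toMeasurable]
    have := hv_ae
    rw [EventuallyEq, ae_iff, Measure.restrict_apply'] at this
    · exact this
    · exact hΩ₀meas
  have huv : ∀ x ∈ Ω₀, x ∉ Z → u x = v x := by
    intro x hx hxz
    by_contra h
    exact hxz (subset_toMeasurable _ _ ⟨h, hx⟩)
  -- a.e. equality under the restricted measure
  have hv_ae' : ∀ᵐ x ∂(volume.restrict Ω₀), u x = v x := hv_ae
  -- the measurable "one-sided Gagliardo" function
  set H : Euc N → ℝ≥0∞ := fun x => ∫⁻ z in Ω₀,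
      (‖v x - v z‖₊ : ℝ≥0∞) ^ q / (‖x - z‖₊ : ℝ≥0∞) ^ s with hH_def
  have hH_meas : Measurable H := by
    apply Measurable.lintegral_prod_right (f := fun x z =>
      (‖v x - v z‖₊ : ℝ≥0∞) ^ q / (‖x - z‖₊ : ℝ≥0∞) ^ s)
    apply Measurable.div
    · exact (((hv_meas.comp measurable_fst).sub
        (hv_meas.comp measurable_snd)).nnnorm.coe_nnreal_ennreal).pow_const _
    · exact ((measurable_fst.sub measurable_snd).nnnorm.coe_nnreal_ennreal).pow_const _
  -- finiteness of ∫ H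
  have hI_fin : (∫⁻ x in Ω₀, H x) < ⊤ := by
    have heq : (∫⁻ x in Ω₀, H x) = ∫⁻ x in Ω₀, ∫⁻ z in Ω₀,
        (‖u x - u z‖₊ : ℝ≥0∞) ^ q / (‖x - z‖₊ : ℝ≥0∞) ^ s := by
      apply lintegral_congr_ae
      filter_upwards [hv_ae'] with x hx
      apply lintegral_congr_ae
      filter_upwards [hv_ae'] with z hz
      rw [hx, hz]
    rw [heq]; exact hgag
  -- finiteness of ∫ ‖v‖^q
  have hJ_fin : (∫⁻ x in Ω₀, (‖v x‖₊ : ℝ≥0∞) ^ q) < ⊤ := by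
    have h1 : eLpNorm v (ENNReal.ofReal q) (volume.restrict Ω₀) < ⊤ := by
      rw [eLpNorm_congr_ae hv_ae.symm]; exact hmem.2
    have hp0 : (ENNReal.ofReal q) ≠ 0 := by
      simp [ENNReal.ofReal_eq_zero]; linarith
    rw [eLpNorm_eq_lintegral_rpow_enorm_toReal hp0 ENNReal.ofReal_ne_top,
      ENNReal.toReal_ofReal hq0.le] at h1
    rw [← ENNReal.rpow_lt_top_iff_of_pos (y := 1/q) (by positivity)]
    exact h1
  -- Markov levels
  set δ3 : ℝ≥0∞ := ENNReal.ofReal (ε/3) with hδ3_def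
  have hδ3_0 : δ3 ≠ 0 := by simp [hδ3_def, ENNReal.ofReal_eq_zero]; linarith
  have hδ3_top : δ3 ≠ ⊤ := ENNReal.ofReal_ne_top
  have markov : ∀ F : Euc N → ℝ≥0∞, Measurable F → (∫⁻ x in Ω₀, F x) < ⊤ →
      ∃ n : ℕ, (n:ℝ≥0∞) ≠ 0 ∧ (n:ℝ≥0∞) ≠ ⊤ ∧ volume (K ∩ {x | (n:ℝ≥0∞) ≤ F x}) < δ3 := by
    intro F hF hFfin
    set I := ∫⁻ x in Ω₀, F x with hI
    obtain ⟨n, hn⟩ := ENNReal.exists_nat_gt (r := I / δ3)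
      (ENNReal.div_lt_top hFfin.ne hδ3_0).ne
    have hn0 : (n:ℝ≥0∞) ≠ 0 := by
      rintro h
      rw [h] at hn
      simp at hn
    refine ⟨n, hn0, ENNReal.natCast_ne_top n, ?_⟩
    have h1 : volume (K ∩ {x | (n:ℝ≥0∞) ≤ F x}) ≤ (volume.restrict Ω₀) {x | (n:ℝ≥0∞) ≤ F x} := by
      rw [Measure.restrict_apply' hΩ₀meas]
      exact measure_mono (fun x hx => ⟨hx.2, hKΩ₀ hx.1⟩)
    have h2 : (volume.restrict Ω₀) {x | (n:ℝ≥0∞) ≤ F x} ≤ I / n :=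
      meas_ge_le_lintegral_div hF.aemeasurable hn0 (ENNReal.natCast_ne_top n)
    refine (h1.trans h2).trans_lt ?_
    rw [ENNReal.div_lt_iff (Or.inl hn0) (Or.inl (ENNReal.natCast_ne_top n))]
    rw [ENNReal.div_lt_iff (Or.inl hδ3_0) (Or.inl hδ3_top)] at hn
    rw [mul_comm]; exact hn
  obtain ⟨n, hn0, hntop, hn_meas⟩ := markov H hH_meas hI_fin
  obtain ⟨m, hm0, hmtop, hm_meas⟩ := markov (fun x => (‖v x‖₊ : ℝ≥0∞) ^ q)
    ((hv_meas.nnnorm.coe_nnreal_ennreal).pow_const _) hJ_fin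
  -- the good set
  set G : Set (Euc N) := {x | H x < n} ∩ {x | (‖v x‖₊ : ℝ≥0∞) ^ q < m} with hG_def
  have hG_meas : MeasurableSet G :=
    (measurableSet_lt hH_meas measurable_const).inter
      (measurableSet_lt ((hv_meas.nnnorm.coe_nnreal_ennreal).pow_const _) measurable_const)
  set A : Set (Euc N) := (K ∩ G) \ Z with hA_def
  have hA_meas : MeasurableSet A := ((hK.measurableSet.inter hG_meas)).diff hZ_meas
  have hA_sub : A ⊆ K := fun x hx => hx.1.1
  have hKA : volume (K \ A) < δ3 + δ3 := by
    have hsub : K \ A ⊆ (K ∩ {x | (n:ℝ≥0∞) ≤ H x}) ∪ ((K ∩ {x | (m:ℝ≥0∞) ≤ (‖v x‖₊ : ℝ≥0∞) ^ q}) ∪ Z) := by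
      intro x hx
      obtain ⟨hxK, hxA⟩ := hx
      by_cases hz : x ∈ Z
      · exact Or.inr (Or.inr hz)
      · by_cases h1 : H x < n
        · refine Or.inr (Or.inl ⟨hxK, ?_⟩)
          by_contra h2
          have h2' : (‖v x‖₊ : ℝ≥0∞) ^ q < m := not_le.1 h2
          exact hxA ⟨⟨hxK, ⟨h1, h2'⟩⟩, hz⟩
        · exact Or.inl ⟨hxK, not_lt.1 h1⟩
    calc volume (K \ A) ≤ volume (K ∩ {x | (n:ℝ≥0∞) ≤ H x})
          + (volume (K ∩ {x | (m:ℝ≥0∞) ≤ (‖v x‖₊ : ℝ≥0∞) ^ q}) + volume Z) :=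
        le_trans (measure_mono hsub) (le_trans (measure_union_le _ _)
          (add_le_add le_rfl (measure_union_le _ _)))
      _ < δ3 + δ3 := by
          rw [hZ_null, add_zero]
          exact ENNReal.add_lt_add hn_meas hm_meas
  -- inner regularity: compact subset
  have hA_fin : volume A ≠ ⊤ :=
    ((measure_mono hA_sub).trans_lt hK.measure_lt_top).ne
  obtain ⟨B, hBA, hB_comp, hB_meas⟩ := hA_meas.exists_isCompact_diff_lt hA_fin hδ3_0
  refine ⟨B, hB_comp, hBA.trans hA_sub, ?_, ?_⟩
  · have : K \ B ⊆ (K \ A) ∪ (A \ B) := by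
      intro x hx
      by_cases h : x ∈ A
      · exact Or.inr ⟨h, hx.2⟩
      · exact Or.inl ⟨hx.1, h⟩
    calc volume (K \ B) ≤ volume (K \ A) + volume (A \ B) :=
          le_trans (measure_mono this) (measure_union_le _ _)
      _ < (δ3 + δ3) + δ3 := ENNReal.add_lt_add hKA hB_meas
      _ = ENNReal.ofReal ε := by
          rw [hδ3_def, ← ENNReal.ofReal_add (by linarith) (by linarith),
            ← ENNReal.ofReal_add (by linarith) (by linarith)]
          congr 1
          ring
  · -- Hölder continuity on B
    set c₁ : ℝ≥0∞ := volume (ball (0 : Euc N) 1) with hc₁_def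
    have hc₁0 : c₁ ≠ 0 := (measure_ball_pos _ _ one_pos).ne'
    have hc₁top : c₁ ≠ ⊤ := measure_ball_lt_top.ne
    set X : ℝ≥0∞ := ENNReal.ofReal (δ/4) ^ r with hX_def
    have hX0 : X ≠ 0 := by
      rw [hX_def]
      exact (ENNReal.rpow_pos (ENNReal.ofReal_pos.2 (by linarith)) ENNReal.ofReal_ne_top).ne'
    have hXtop : X ≠ ⊤ := ENNReal.rpow_ne_top_of_nonneg hr0.le ENNReal.ofReal_ne_top
    set C1 : ℝ≥0∞ := 2 * (m : ℝ≥0∞) ^ (1/q) * X⁻¹ with hC1_def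
    have hC1top : C1 ≠ ⊤ := by
      rw [hC1_def]
      exact ENNReal.mul_ne_top
        (ENNReal.mul_ne_top (by simp) (ENNReal.rpow_ne_top_of_nonneg (by positivity) hmtop))
        (ENNReal.inv_ne_top.2 hX0)
    set C2b : ℝ≥0∞ := (2:ℝ≥0∞) ^ q * 2 * (2:ℝ≥0∞) ^ s * n * c₁⁻¹ with hC2b_def
    have hC2btop : C2b ≠ ⊤ := by
      rw [hC2b_def]
      refine ENNReal.mul_ne_top (ENNReal.mul_ne_top (ENNReal.mul_ne_top (ENNReal.mul_ne_top
        (ENNReal.rpow_ne_top_of_nonneg hq0.le (by norm_num)) (by norm_num))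
        (ENNReal.rpow_ne_top_of_nonneg hs0.le (by norm_num))) hntop) (ENNReal.inv_ne_top.2 hc₁0)
    set C2 : ℝ≥0∞ := C2b ^ (1/q) with hC2_def
    have hC2top : C2 ≠ ⊤ := ENNReal.rpow_ne_top_of_nonneg (by positivity) hC2btop
    refine ⟨(C1 + C2).toNNReal, ?_⟩
    have hcoe : (((C1 + C2).toNNReal : ℝ≥0) : ℝ≥0∞) = C1 + C2 :=
      ENNReal.coe_toNNReal (ENNReal.add_ne_top.2 ⟨hC1top, hC2top⟩)
    intro x hx y hy
    obtain ⟨⟨hxK, hxG⟩, hxZ⟩ := hBA hx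
    obtain ⟨⟨hyK, hyG⟩, hyZ⟩ := hBA hy
    have hux : u x = v x := huv x (hKΩ₀ hxK) hxZ
    have huy : u y = v y := huv y (hKΩ₀ hyK) hyZ
    have hHx : H x ≤ n := le_of_lt hxG.1
    have hHy : H y ≤ n := le_of_lt hyG.1
    have hvx : (‖v x‖₊ : ℝ≥0∞) ^ q ≤ m := le_of_lt hxG.2
    have hvy : (‖v y‖₊ : ℝ≥0∞) ^ q ≤ m := le_of_lt hyG.2
    show edist (u x) (u y) ≤ _ * edist x y ^ (r : ℝ)
    rw [hcoe]
    rcases eq_or_ne x y with rfl | hxy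
    · simp
    set ρ : ℝ := dist x y with hρ_def
    have hρ0 : 0 < ρ := dist_pos.2 hxy
    set e : ℝ≥0∞ := edist x y with he_def
    have he_eq : e = ENNReal.ofReal ρ := by rw [he_def, edist_dist]
    have he0 : e ≠ 0 := by
      rw [he_eq, ne_eq, ENNReal.ofReal_eq_zero, not_le]; exact hρ0
    have hetop : e ≠ ⊤ := by rw [he_eq]; exact ENNReal.ofReal_ne_top
    have hpt : ∀ w : Euc N, (‖v w‖₊ : ℝ≥0∞) ^ q ≤ m → (‖v w‖₊ : ℝ≥0∞) ≤ (m : ℝ≥0∞) ^ (1/q) := by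
      intro w hw
      have h := ENNReal.rpow_le_rpow hw (by positivity : (0:ℝ) ≤ 1/q)
      rwa [← ENNReal.rpow_mul, mul_one_div_cancel hq0.ne', ENNReal.rpow_one] at h
    rcases lt_or_ge ρ (δ/4) with hnear | hfar
    · -- near case
      have hN0 : N ≠ 0 := by
        rintro rfl
        exact hxy (Subsingleton.elim x y)
      haveI : Nontrivial (Euc N) := Module.nontrivial_of_finrank_pos (R := ℝ)
        (by rw [finrank_euclideanSpace_fin]; exact Nat.pos_of_ne_zero hN0)
      set mid : Euc N := midpoint ℝ x y with hmid_def
      set D : Set (Euc N) := ball mid ρ with hD_def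
      have hDx : D ⊆ ball x (2*ρ) := by
        intro z hz
        have h1 : dist z mid < ρ := mem_ball.1 hz
        have h2 : dist mid x = ρ/2 := by
          rw [hmid_def, dist_midpoint_left]
          rw [hρ_def]; norm_num; ring
        have h3 := dist_triangle z mid x
        rw [mem_ball]
        linarith
      have hDy : D ⊆ ball y (2*ρ) := by
        intro z hz
        have h1 : dist z mid < ρ := mem_ball.1 hz
        have h2 : dist mid y = ρ/2 := by
          rw [hmid_def, dist_midpoint_right]
          rw [hρ_def]; norm_num; ring
        have h3 := dist_triangle z mid y
        rw [mem_ball]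
        linarith
      have hx2ρ : ball x (2*ρ) ⊆ Ω₀ := (ball_subset_ball (by linarith)).trans (hball x hxK)
      have hy2ρ : ball y (2*ρ) ⊆ Ω₀ := (ball_subset_ball (by linarith)).trans (hball y hyK)
      have h2e : (2:ℝ≥0∞) * e = ENNReal.ofReal (2*ρ) := by
        rw [he_eq, ENNReal.ofReal_mul (by norm_num : (0:ℝ) ≤ 2)]
        norm_num
      have h2e0 : (2:ℝ≥0∞) * e ≠ 0 := by
        simp only [ne_eq, mul_eq_zero, not_or]
        exact ⟨by norm_num, he0⟩
      have h2etop : (2:ℝ≥0∞) * e ≠ ⊤ := ENNReal.mul_ne_top (by norm_num) hetop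
      have h2es0 : ((2:ℝ≥0∞) * e) ^ s ≠ 0 :=
        (ENNReal.rpow_pos (pos_iff_ne_zero.2 h2e0) h2etop).ne'
      have h2estop : ((2:ℝ≥0∞) * e) ^ s ≠ ⊤ := ENNReal.rpow_ne_top_of_nonneg hs0.le h2etop
      -- the key one-sided estimate
      have key : ∀ w : Euc N, H w ≤ n → D ⊆ ball w (2*ρ) → ball w (2*ρ) ⊆ Ω₀ →
          (∫⁻ z in D, (‖v w - v z‖₊ : ℝ≥0∞) ^ q) ≤ ((2:ℝ≥0∞)*e)^s * n := by
        intro w hHw hDw hwΩ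
        have hgmeas : Measurable fun z : Euc N =>
            (‖v w - v z‖₊ : ℝ≥0∞) ^ q / (‖w - z‖₊ : ℝ≥0∞) ^ s :=
          (((measurable_const.sub hv_meas).nnnorm.coe_nnreal_ennreal).pow_const _).div
            (((measurable_const.sub measurable_id).nnnorm.coe_nnreal_ennreal).pow_const _)
        have step1 : (∫⁻ z in D, (‖v w - v z‖₊ : ℝ≥0∞) ^ q) ≤
            ∫⁻ z in D, ((2:ℝ≥0∞)*e)^s * ((‖v w - v z‖₊ : ℝ≥0∞) ^ q / (‖w - z‖₊ : ℝ≥0∞) ^ s) := by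
          refine setLIntegral_mono (hgmeas.const_mul _) ?_
          intro z hz
          have hwz : ((‖w - z‖₊ : ℝ≥0∞)) ^ s ≤ ((2:ℝ≥0∞)*e)^s := by
            refine ENNReal.rpow_le_rpow ?_ hs0.le
            rw [h2e]
            have hd : dist w z < 2*ρ := by
              have := mem_ball.1 (hDw hz)
              rwa [dist_comm] at this
            calc ((‖w - z‖₊ : ℝ≥0∞)) = edist w z := (edist_eq_enorm_sub w z).symm
              _ = ENNReal.ofReal (dist w z) := edist_dist w z
              _ ≤ ENNReal.ofReal (2*ρ) := ENNReal.ofReal_le_ofReal hd.le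
          calc (‖v w - v z‖₊ : ℝ≥0∞) ^ q
              = ((2:ℝ≥0∞)*e)^s * ((‖v w - v z‖₊ : ℝ≥0∞) ^ q / ((2:ℝ≥0∞)*e)^s) :=
                (ENNReal.mul_div_cancel' (fun h => absurd h h2es0) (fun h => absurd h h2estop)).symm
            _ ≤ ((2:ℝ≥0∞)*e)^s * ((‖v w - v z‖₊ : ℝ≥0∞) ^ q / (‖w - z‖₊ : ℝ≥0∞) ^ s) :=
                mul_le_mul_right (ENNReal.div_le_div_left hwz _) _
        calc (∫⁻ z in D, (‖v w - v z‖₊ : ℝ≥0∞) ^ q)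
            ≤ ∫⁻ z in D, ((2:ℝ≥0∞)*e)^s * ((‖v w - v z‖₊ : ℝ≥0∞) ^ q / (‖w - z‖₊ : ℝ≥0∞) ^ s) :=
              step1
          _ = ((2:ℝ≥0∞)*e)^s * ∫⁻ z in D, (‖v w - v z‖₊ : ℝ≥0∞) ^ q / (‖w - z‖₊ : ℝ≥0∞) ^ s :=
              lintegral_const_mul _ hgmeas
          _ ≤ ((2:ℝ≥0∞)*e)^s * ∫⁻ z in Ω₀, (‖v w - v z‖₊ : ℝ≥0∞) ^ q / (‖w - z‖₊ : ℝ≥0∞) ^ s :=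
              mul_le_mul_right (lintegral_mono_set (hDw.trans hwΩ)) _
          _ = ((2:ℝ≥0∞)*e)^s * H w := rfl
          _ ≤ ((2:ℝ≥0∞)*e)^s * n := mul_le_mul_right hHw _
      -- volume of D
      have hvolD0 : volume D ≠ 0 := (measure_ball_pos _ _ hρ0).ne'
      have hvolDtop : volume D ≠ ⊤ := measure_ball_lt_top.ne
      have volD_def : volume D = e ^ (N:ℝ) * c₁ := by
        rw [hD_def, Measure.addHaar_ball _ _ hρ0.le, finrank_euclideanSpace_fin, he_eq,
          ENNReal.ofReal_rpow_of_pos hρ0, Real.rpow_natCast]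
      set Evxy : ℝ≥0∞ := (‖v x - v y‖₊ : ℝ≥0∞) with hE_def
      have meas1 : Measurable fun z : Euc N => (‖v x - v z‖₊ : ℝ≥0∞) ^ q :=
        ((measurable_const.sub hv_meas).nnnorm.coe_nnreal_ennreal).pow_const _
      have meas2 : Measurable fun z : Euc N => (‖v z - v y‖₊ : ℝ≥0∞) ^ q :=
        ((hv_meas.sub measurable_const).nnnorm.coe_nnreal_ennreal).pow_const _
      have ptwise : ∀ z : Euc N, Evxy ^ q ≤
          (2:ℝ≥0∞)^q * ((‖v x - v z‖₊ : ℝ≥0∞) ^ q + (‖v z - v y‖₊ : ℝ≥0∞) ^ q) := by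
        intro z
        set a := (‖v x - v z‖₊ : ℝ≥0∞) with ha
        set b := (‖v z - v y‖₊ : ℝ≥0∞) with hb
        have tri : Evxy ≤ a + b := by
          rw [hE_def, ha, hb, ← nndist_eq_nnnorm_sub, ← edist_nndist, ← nndist_eq_nnnorm_sub, ← edist_nndist,
            ← nndist_eq_nnnorm_sub, ← edist_nndist]
          exact edist_triangle _ _ _
        have h2 : a + b ≤ 2 * max a b := by
          rw [two_mul]
          exact add_le_add (le_max_left _ _) (le_max_right _ _)
        calc Evxy ^ q ≤ (2 * max a b) ^ q := ENNReal.rpow_le_rpow (tri.trans h2) hq0.le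
          _ = (2:ℝ≥0∞)^q * (max a b)^q := ENNReal.mul_rpow_of_nonneg _ _ hq0.le
          _ ≤ (2:ℝ≥0∞)^q * (a^q + b^q) := by
              refine mul_le_mul_right ?_ _
              rcases max_cases a b with ⟨h, _⟩ | ⟨h, _⟩ <;> rw [h]
              · exact le_self_add
              · exact le_add_self
      have stepA : volume D * Evxy ^ q ≤
          (2:ℝ≥0∞)^q * (((2:ℝ≥0∞)*e)^s * n + ((2:ℝ≥0∞)*e)^s * n) := by
        have h1 : volume D * Evxy ^ q = ∫⁻ _ in D, Evxy ^ q := by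
          rw [setLIntegral_const]; ring
        rw [h1]
        calc (∫⁻ _ in D, Evxy ^ q)
            ≤ ∫⁻ z in D, (2:ℝ≥0∞)^q *
              ((‖v x - v z‖₊ : ℝ≥0∞) ^ q + (‖v z - v y‖₊ : ℝ≥0∞) ^ q) :=
              lintegral_mono fun z => ptwise z
          _ = (2:ℝ≥0∞)^q * ((∫⁻ z in D, (‖v x - v z‖₊ : ℝ≥0∞) ^ q)
              + ∫⁻ z in D, (‖v z - v y‖₊ : ℝ≥0∞) ^ q) := by
              rw [lintegral_const_mul (f := fun z => (‖v x - v z‖₊ : ℝ≥0∞) ^ q + (‖v z - v y‖₊ : ℝ≥0∞) ^ q) _ (meas1.add meas2), lintegral_add_left meas1]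
          _ ≤ (2:ℝ≥0∞)^q * (((2:ℝ≥0∞)*e)^s * n + ((2:ℝ≥0∞)*e)^s * n) := by
              refine mul_le_mul_right (add_le_add ?_ ?_) _
              · exact key x hHx hDx hx2ρ
              · have hrev : (∫⁻ z in D, (‖v z - v y‖₊ : ℝ≥0∞) ^ q)
                    = ∫⁻ z in D, (‖v y - v z‖₊ : ℝ≥0∞) ^ q := by
                  have : ∀ z : Euc N, ‖v z - v y‖₊ = ‖v y - v z‖₊ := fun z => by
                    rw [← nnnorm_neg, neg_sub]
                  simp_rw [this]
                rw [hrev]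
                exact key y hHy hDy hy2ρ
      have stepB : Evxy ^ q ≤ C2b * e ^ (r*q) := by
        have hdiv : Evxy ^ q ≤ ((2:ℝ≥0∞)^q * (((2:ℝ≥0∞)*e)^s * n + ((2:ℝ≥0∞)*e)^s * n))
            / volume D := by
          rw [ENNReal.le_div_iff_mul_le (Or.inl hvolD0) (Or.inl hvolDtop), mul_comm]
          exact stepA
        refine hdiv.trans ?_
        rw [ENNReal.div_le_iff_le_mul (Or.inl hvolD0) (Or.inl hvolDtop)]
        have hes : e ^ s = e ^ (N:ℝ) * e ^ (r*q) := by
          rw [hs_def]; exact ENNReal.rpow_add _ _ he0 hetop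
        have h2es : ((2:ℝ≥0∞)*e)^s = (2:ℝ≥0∞)^s * e^s := ENNReal.mul_rpow_of_nonneg _ _ hs0.le
        have hRHS : (C2b * e ^ (r*q)) * volume D
            = ((2:ℝ≥0∞)^q * 2 * (2:ℝ≥0∞)^s * n) * (e ^ (N:ℝ) * e ^ (r*q)) * (c₁⁻¹ * c₁) := by
          rw [hC2b_def, volD_def]; ring
        rw [hRHS, ENNReal.inv_mul_cancel hc₁0 hc₁top, mul_one, h2es, hes]
        apply le_of_eq
        ring
      have stepC : Evxy ≤ C2 * e ^ r := by
        have hEex : Evxy = (Evxy ^ q) ^ (1/q) := by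
          rw [← ENNReal.rpow_mul, mul_one_div_cancel hq0.ne', ENNReal.rpow_one]
        calc Evxy = (Evxy ^ q) ^ (1/q) := hEex
          _ ≤ (C2b * e ^ (r*q)) ^ (1/q) := ENNReal.rpow_le_rpow stepB (by positivity)
          _ = C2b ^ (1/q) * (e ^ (r*q)) ^ (1/q) := ENNReal.mul_rpow_of_nonneg _ _ (by positivity)
          _ = C2 * e ^ r := by
              rw [hC2_def, ← ENNReal.rpow_mul]
              congr 1
              field_simp
      calc edist (u x) (u y) = Evxy := by rw [hux, huy, hE_def, edist_nndist, nndist_eq_nnnorm_sub]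
        _ ≤ C2 * e ^ r := stepC
        _ ≤ (C1 + C2) * e ^ r := mul_le_mul_left le_add_self _
    · -- far case
      have hb1 : edist (v x) (v y) ≤ 2 * (m : ℝ≥0∞) ^ (1/q) := by
        calc edist (v x) (v y) ≤ edist (v x) 0 + edist 0 (v y) := edist_triangle _ _ _
          _ = (‖v x‖₊ : ℝ≥0∞) + (‖v y‖₊ : ℝ≥0∞) := by
              rw [edist_comm 0 (v y)]; exact congrArg₂ (· + ·) (edist_zero_right _) (edist_zero_right _)
          _ ≤ (m : ℝ≥0∞) ^ (1/q) + (m : ℝ≥0∞) ^ (1/q) := add_le_add (hpt x hvx) (hpt y hvy)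
          _ = 2 * (m : ℝ≥0∞) ^ (1/q) := (two_mul _).symm
      have hXe : X ≤ e ^ r := by
        rw [hX_def, he_eq]
        exact ENNReal.rpow_le_rpow (ENNReal.ofReal_le_ofReal hfar) hr0.le
      calc edist (u x) (u y) = edist (v x) (v y) := by rw [hux, huy]
        _ ≤ 2 * (m : ℝ≥0∞) ^ (1/q) := hb1
        _ = C1 * X := by rw [hC1_def, mul_assoc, ENNReal.inv_mul_cancel hX0 hXtop, mul_one]
        _ ≤ C1 * e ^ r := mul_le_mul_right hXe _
        _ ≤ (C1 + C2) * e ^ r := mul_le_mul_left le_self_add _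
end
end

section
/- Let Ω ⊂ ℝ^N be an open set, u ∈ L^1_loc(Ω,ℝ^d) and x ∈ Ω. For k = 1,2 let h_k ∈ ℝ^d∖{0} and ν_k ∈ S^{N-1}, and define w_k(y) := h_k if ν_k·y > 0 and w_k(y) := 0 if ν_k·y < 0. Assume that for k = 1,2 one has lim_{ρ→0+} inf_{c∈ℝ^d} ⨍_{B_1(0)} |u(x+ρy) − w_k(y) − c| dy = 0. Then (h_1,ν_1) = (h_2,ν_2) or (h_1,ν_1) = (−h_2,−ν_2). -/
open MeasureTheory Metric Filter Set Topology
open scoped ENNReal NNReal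

noncomputable section

/-- If a function is almost constant in `L¹` on the unit ball, then its values on two
nonempty open subsets of the ball must coincide. -/
lemma sep_lemma {N d : ℕ} {D : Euc N → Euc d} {A B : Set (Euc N)} {a b : Euc d}
    (hA : IsOpen A) (hA1 : A ⊆ ball (0:Euc N) 1) (hAne : A.Nonempty)
    (hB : IsOpen B) (hB1 : B ⊆ ball (0:Euc N) 1) (hBne : B.Nonempty)
    (hDa : ∀ y ∈ A, D y = a) (hDb : ∀ y ∈ B, D y = b)
    (H : ∀ ε : ℝ≥0∞, 0 < ε → ∃ c : Euc d,
      (∫⁻ y in ball (0:Euc N) 1, (‖D y - c‖₊ : ℝ≥0∞)) ≤ ε) :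
    a = b := by
  by_contra hab
  have hAv : 0 < volume A := hA.measure_pos volume hAne
  have hBv : 0 < volume B := hB.measure_pos volume hBne
  set m := min (volume A) (volume B) with hm
  have hm0 : m ≠ 0 := (lt_min hAv hBv).ne'
  have hmt : m ≠ ⊤ :=
    ((min_le_left _ _).trans_lt ((measure_mono hA1).trans_lt measure_ball_lt_top)).ne
  have habn : (‖a - b‖₊ : ℝ≥0∞) ≠ 0 := by
    simp only [ne_eq, ENNReal.coe_eq_zero, nnnorm_eq_zero, sub_eq_zero]
    exact hab
  set M := m * (‖a - b‖₊ : ℝ≥0∞) with hM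
  have hM0 : M ≠ 0 := mul_ne_zero hm0 habn
  have hMt : M ≠ ⊤ := ENNReal.mul_ne_top hmt ENNReal.coe_ne_top
  have hε0 : 0 < M / 2 / 2 :=
    ENNReal.div_pos (ENNReal.div_pos hM0 ENNReal.ofNat_ne_top).ne' ENNReal.ofNat_ne_top
  obtain ⟨c, hc⟩ := H (M / 2 / 2) hε0
  have key : ∀ (S : Set (Euc N)) (v : Euc d), IsOpen S → S ⊆ ball (0:Euc N) 1 →
      (∀ y ∈ S, D y = v) → volume S * (‖v - c‖₊ : ℝ≥0∞) ≤ M / 2 / 2 := by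
    intro S v hS hS1 hDv
    have h1 : (∫⁻ y in S, (‖v - c‖₊ : ℝ≥0∞)) = (‖v - c‖₊ : ℝ≥0∞) * volume S := by
      simp [lintegral_const, Measure.restrict_apply, MeasurableSet.univ]
    have h2 : (∫⁻ y in S, (‖v - c‖₊ : ℝ≥0∞)) = ∫⁻ y in S, (‖D y - c‖₊ : ℝ≥0∞) := by
      refine setLIntegral_congr_fun hS.measurableSet (fun y hy => ?_)
      simp only [hDv y hy]
    calc volume S * (‖v - c‖₊ : ℝ≥0∞) = ∫⁻ y in S, (‖v - c‖₊ : ℝ≥0∞) := by rw [h1, mul_comm]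
      _ = ∫⁻ y in S, (‖D y - c‖₊ : ℝ≥0∞) := h2
      _ ≤ ∫⁻ y in ball (0:Euc N) 1, (‖D y - c‖₊ : ℝ≥0∞) := lintegral_mono_set hS1
      _ ≤ M / 2 / 2 := hc
  have h1 : m * (‖a - c‖₊ : ℝ≥0∞) ≤ M / 2 / 2 :=
    le_trans (mul_le_mul' (min_le_left _ _) le_rfl) (key A a hA hA1 hDa)
  have h2 : m * (‖b - c‖₊ : ℝ≥0∞) ≤ M / 2 / 2 :=
    le_trans (mul_le_mul' (min_le_right _ _) le_rfl) (key B b hB hB1 hDb)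
  have htri : (‖a - b‖₊ : ℝ≥0∞) ≤ (‖a - c‖₊ : ℝ≥0∞) + (‖b - c‖₊ : ℝ≥0∞) := by
    have : a - b = (a - c) - (b - c) := by abel
    rw [this]
    exact_mod_cast nnnorm_sub_le _ _
  have hle : M ≤ 2 * (M / 2 / 2) := by
    calc M = m * (‖a - b‖₊ : ℝ≥0∞) := hM
      _ ≤ m * ((‖a - c‖₊ : ℝ≥0∞) + (‖b - c‖₊ : ℝ≥0∞)) := mul_le_mul' le_rfl htri
      _ = m * (‖a - c‖₊ : ℝ≥0∞) + m * (‖b - c‖₊ : ℝ≥0∞) := mul_add _ _ _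
      _ ≤ M / 2 / 2 + M / 2 / 2 := add_le_add h1 h2
      _ = 2 * (M / 2 / 2) := (two_mul _).symm
  have hlt : 2 * (M / 2 / 2) < M :=
    lt_of_le_of_lt (ENNReal.mul_div_le) (ENNReal.half_lt_self hM0 hMt)
  exact absurd (hle.trans_lt hlt) (lt_irrefl M)

/-- Let `Ω ⊆ ℝ^N` be open, `u ∈ L^1_loc(Ω, ℝ^d)` and `x ∈ Ω`. For `k = 1,2`
let `h_k ∈ ℝ^d ∖ {0}` and `ν_k ∈ S^{N−1}`, and let `w_k(y) = h_k` if `ν_k·y > 0`, `w_k(y) = 0`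
if `ν_k·y < 0`. If `lim_{ρ→0+} inf_{c ∈ ℝ^d} ⨍_{B_1(0)} |u(x + ρy) − w_k(y) − c| dy = 0` for
`k = 1,2`, then `(h₁, ν₁) = (h₂, ν₂)` or `(h₁, ν₁) = (−h₂, −ν₂)`. -/
theorem gen_jump_data_unique
    {N d : ℕ} {Ω : Set (Euc N)} (hΩ : IsOpen Ω)
    (u : Euc N → Euc d) (hu : LocallyIntegrableOn u Ω volume)
    (x : Euc N) (hx : x ∈ Ω)
    (h₁ h₂ : Euc d) (hh₁ : h₁ ≠ 0) (hh₂ : h₂ ≠ 0)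
    (ν₁ ν₂ : Euc N) (hν₁ : ‖ν₁‖ = 1) (hν₂ : ‖ν₂‖ = 1)
    (hblow₁ : Tendsto (fun ρ : ℝ => ⨅ c : Euc d,
        eavg (ball (0 : Euc N) 1) fun y =>
          (‖u (x + ρ • y) - (if 0 < (inner ℝ ν₁ y : ℝ) then h₁ else 0) - c‖₊ : ℝ≥0∞))
      (𝓝[>] (0:ℝ)) (𝓝 0))
    (hblow₂ : Tendsto (fun ρ : ℝ => ⨅ c : Euc d,
        eavg (ball (0 : Euc N) 1) fun y =>
          (‖u (x + ρ • y) - (if 0 < (inner ℝ ν₂ y : ℝ) then h₂ else 0) - c‖₊ : ℝ≥0∞))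
      (𝓝[>] (0:ℝ)) (𝓝 0)) :
    (h₁ = h₂ ∧ ν₁ = ν₂) ∨ (h₁ = -h₂ ∧ ν₁ = -ν₂) := by
  -- a small closed ball around x inside Ω
  obtain ⟨r, hr0, hrΩ⟩ : ∃ r > 0, closedBall x r ⊆ Ω := by
    rcases Metric.nhds_basis_closedBall.mem_iff.1 (hΩ.mem_nhds hx) with ⟨r, hr0, hr⟩
    exact ⟨r, hr0, hr⟩
  have hu_r : AEStronglyMeasurable u (volume.restrict (closedBall x r)) :=
    (hu.integrableOn_compact_subset hrΩ (isCompact_closedBall x r)).aestronglyMeasurable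
  set w₁ : Euc N → Euc d := fun y => if 0 < (inner ℝ ν₁ y : ℝ) then h₁ else 0 with hw₁
  set w₂ : Euc N → Euc d := fun y => if 0 < (inner ℝ ν₂ y : ℝ) then h₂ else 0 with hw₂
  set D : Euc N → Euc d := fun y => w₁ y - w₂ y with hD
  set V := volume (ball (0 : Euc N) 1) with hVdef
  have hV0 : V ≠ 0 := (measure_ball_pos _ _ one_pos).ne'
  have hVt : V ≠ ⊤ := measure_ball_lt_top.ne
  -- continuity/measurability of the inner products
  have hcont₁ : Continuous fun y : Euc N => (inner ℝ ν₁ y : ℝ) :=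
    continuous_const.inner continuous_id
  have hcont₂ : Continuous fun y : Euc N => (inner ℝ ν₂ y : ℝ) :=
    continuous_const.inner continuous_id
  have hw₁m : StronglyMeasurable w₁ := by
    refine (Measurable.ite ?_ measurable_const measurable_const).stronglyMeasurable
    exact measurableSet_lt measurable_const hcont₁.measurable
  have hw₂m : StronglyMeasurable w₂ := by
    refine (Measurable.ite ?_ measurable_const measurable_const).stronglyMeasurable
    exact measurableSet_lt measurable_const hcont₂.measurable
  -- the key smallness property of D
  have H : ∀ ε : ℝ≥0∞, 0 < ε → ∃ c : Euc d,
      (∫⁻ y in ball (0:Euc N) 1, (‖D y - c‖₊ : ℝ≥0∞)) ≤ ε := by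
    intro ε hε
    set δ := ε / 2 / V with hδdef
    have hδ : 0 < δ :=
      ENNReal.div_pos (ENNReal.div_pos hε.ne' ENNReal.ofNat_ne_top).ne' hVt
    have ev1 := hblow₁.eventually_lt_const hδ
    have ev2 := hblow₂.eventually_lt_const hδ
    have ev3 : Ioo (0:ℝ) r ∈ 𝓝[>] (0:ℝ) := Ioo_mem_nhdsGT_of_mem ⟨le_refl 0, hr0⟩
    obtain ⟨ρ, ⟨hρ1, hρ2⟩, hρ0, hρr⟩ := ((ev1.and ev2).and ev3).exists
    -- the rescaling map
    have hQMP : Measure.QuasiMeasurePreserving (fun y : Euc N => x + ρ • y)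
        (volume.restrict (ball (0:Euc N) 1)) (volume.restrict (closedBall x r)) := by
      have hs : Measure.QuasiMeasurePreserving (fun y : Euc N => ρ • y) volume volume :=
        Measure.quasiMeasurePreserving_smul volume hρ0.ne'
      have ht : Measure.QuasiMeasurePreserving (fun y : Euc N => x + y) volume volume :=
        (measurePreserving_add_left volume x).quasiMeasurePreserving
      have hcomp : Measure.QuasiMeasurePreserving (fun y : Euc N => x + ρ • y)
          (volume : Measure (Euc N)) volume := ht.comp hs
      refine hcomp.restrict fun y hy => ?_
      have : dist (x + ρ • y) x = ρ * ‖y‖ := by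
        rw [dist_eq_norm, add_sub_cancel_left, norm_smul, Real.norm_eq_abs, abs_of_pos hρ0]
      refine mem_closedBall.2 ?_
      rw [this]
      have : ρ * ‖y‖ ≤ ρ * 1 := by
        have := (mem_ball_zero_iff.1 hy).le
        exact mul_le_mul_of_nonneg_left this hρ0.le
      linarith
    have huφ : AEStronglyMeasurable (fun y => u (x + ρ • y))
        (volume.restrict (ball (0:Euc N) 1)) :=
      hu_r.comp_quasiMeasurePreserving hQMP
    -- extract c₁, c₂
    rw [iInf_lt_iff] at hρ1 hρ2
    obtain ⟨c₁, hc₁⟩ := hρ1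
    obtain ⟨c₂, hc₂⟩ := hρ2
    rw [eavg] at hc₁ hc₂
    have hL₁ : (∫⁻ y in ball (0:Euc N) 1,
        (‖u (x + ρ • y) - w₁ y - c₁‖₊ : ℝ≥0∞)) < ε / 2 := by
      have := (ENNReal.div_lt_iff (Or.inl hV0) (Or.inl hVt)).1 hc₁
      calc (∫⁻ y in ball (0:Euc N) 1, (‖u (x + ρ • y) - w₁ y - c₁‖₊ : ℝ≥0∞))
          < δ * V := this
        _ = ε / 2 := ENNReal.div_mul_cancel hV0 hVt
    have hL₂ : (∫⁻ y in ball (0:Euc N) 1,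
        (‖u (x + ρ • y) - w₂ y - c₂‖₊ : ℝ≥0∞)) < ε / 2 := by
      have := (ENNReal.div_lt_iff (Or.inl hV0) (Or.inl hVt)).1 hc₂
      calc (∫⁻ y in ball (0:Euc N) 1, (‖u (x + ρ • y) - w₂ y - c₂‖₊ : ℝ≥0∞))
          < δ * V := this
        _ = ε / 2 := ENNReal.div_mul_cancel hV0 hVt
    refine ⟨c₂ - c₁, ?_⟩
    have haem : AEMeasurable (fun y => (‖u (x + ρ • y) - w₂ y - c₂‖₊ : ℝ≥0∞))
        (volume.restrict (ball (0:Euc N) 1)) :=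
      ((huφ.sub hw₂m.aestronglyMeasurable).sub aestronglyMeasurable_const).enorm
    calc (∫⁻ y in ball (0:Euc N) 1, (‖D y - (c₂ - c₁)‖₊ : ℝ≥0∞))
        ≤ ∫⁻ y in ball (0:Euc N) 1, ((‖u (x + ρ • y) - w₂ y - c₂‖₊ : ℝ≥0∞)
            + (‖u (x + ρ • y) - w₁ y - c₁‖₊ : ℝ≥0∞)) := by
          refine lintegral_mono fun y => ?_
          have heq : D y - (c₂ - c₁)
              = (u (x + ρ • y) - w₂ y - c₂) - (u (x + ρ • y) - w₁ y - c₁) := by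
            simp only [hD]; abel
          rw [heq]
          simpa using ENNReal.coe_le_coe.2
            (nnnorm_sub_le (u (x + ρ • y) - w₂ y - c₂) (u (x + ρ • y) - w₁ y - c₁))
      _ = (∫⁻ y in ball (0:Euc N) 1, (‖u (x + ρ • y) - w₂ y - c₂‖₊ : ℝ≥0∞))
          + ∫⁻ y in ball (0:Euc N) 1, (‖u (x + ρ • y) - w₁ y - c₁‖₊ : ℝ≥0∞) :=
          lintegral_add_left' haem _
      _ ≤ ε / 2 + ε / 2 := add_le_add hL₂.le hL₁.le
      _ = ε := ENNReal.add_halves ε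
  -- now the case analysis
  have hsq₁ : (inner ℝ ν₁ ν₁ : ℝ) = 1 := by
    rw [real_inner_self_eq_norm_sq, hν₁]; norm_num
  have hsq₂ : (inner ℝ ν₂ ν₂ : ℝ) = 1 := by
    rw [real_inner_self_eq_norm_sq, hν₂]; norm_num
  by_cases hee : ν₁ = ν₂
  · subst hee
    left
    refine ⟨?_, rfl⟩
    have := sep_lemma (D := D) (a := h₁ - h₂) (b := 0)
      ((isOpen_lt continuous_const hcont₁).inter isOpen_ball)
      (inter_subset_right)
      ⟨(2:ℝ)⁻¹ • ν₁, by
        constructor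
        · show 0 < (inner ℝ ν₁ ((2:ℝ)⁻¹ • ν₁) : ℝ)
          rw [real_inner_smul_right, hsq₁]; norm_num
        · rw [mem_ball_zero_iff, norm_smul, Real.norm_eq_abs, hν₁]; norm_num [abs_of_nonneg]⟩
      ((isOpen_lt hcont₁ continuous_const).inter isOpen_ball)
      (inter_subset_right)
      ⟨-((2:ℝ)⁻¹ • ν₁), by
        constructor
        · show (inner ℝ ν₁ (-((2:ℝ)⁻¹ • ν₁)) : ℝ) < 0
          rw [inner_neg_right, real_inner_smul_right, hsq₁]; norm_num
        · rw [mem_ball_zero_iff, norm_neg, norm_smul, Real.norm_eq_abs, hν₁]; norm_num [abs_of_nonneg]⟩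
      (fun y hy => by
        have h1y : (0:ℝ) < inner ℝ ν₁ y := hy.1
        simp only [hD, hw₁, hw₂]
        rw [if_pos h1y, if_pos h1y])
      (fun y hy => by
        have h1y : (inner ℝ ν₁ y : ℝ) < 0 := hy.1
        have hn : ¬ (0 < (inner ℝ ν₁ y : ℝ)) := not_lt.2 h1y.le
        simp only [hD, hw₁, hw₂]
        rw [if_neg hn, if_neg hn, sub_zero]) H
    exact sub_eq_zero.1 this
  · by_cases hee' : ν₁ = -ν₂
    · right
      refine ⟨?_, hee'⟩
      have key := sep_lemma (D := D) (a := h₁) (b := -h₂)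
        ((isOpen_lt continuous_const hcont₁).inter isOpen_ball)
        (inter_subset_right)
        ⟨(2:ℝ)⁻¹ • ν₁, by
          constructor
          · show 0 < (inner ℝ ν₁ ((2:ℝ)⁻¹ • ν₁) : ℝ)
            rw [real_inner_smul_right, hsq₁]; norm_num
          · rw [mem_ball_zero_iff, norm_smul, Real.norm_eq_abs, hν₁]; norm_num [abs_of_nonneg]⟩
        ((isOpen_lt hcont₁ continuous_const).inter isOpen_ball)
        (inter_subset_right)
        ⟨-((2:ℝ)⁻¹ • ν₁), by
          constructor
          · show (inner ℝ ν₁ (-((2:ℝ)⁻¹ • ν₁)) : ℝ) < 0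
            rw [inner_neg_right, real_inner_smul_right, hsq₁]; norm_num
          · rw [mem_ball_zero_iff, norm_neg, norm_smul, Real.norm_eq_abs, hν₁]; norm_num [abs_of_nonneg]⟩
        (fun y hy => by
          have h1y : (0:ℝ) < inner ℝ ν₁ y := hy.1
          have heq : (inner ℝ ν₁ y : ℝ) = -(inner ℝ ν₂ y : ℝ) := by
            rw [hee', inner_neg_left]
          have h2y : (inner ℝ ν₂ y : ℝ) < 0 := by linarith
          have hn : ¬ (0 < (inner ℝ ν₂ y : ℝ)) := not_lt.2 h2y.le
          simp only [hD, hw₁, hw₂]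
          rw [if_pos h1y, if_neg hn, sub_zero])
        (fun y hy => by
          have h1y : (inner ℝ ν₁ y : ℝ) < 0 := hy.1
          have heq : (inner ℝ ν₁ y : ℝ) = -(inner ℝ ν₂ y : ℝ) := by
            rw [hee', inner_neg_left]
          have h2y : 0 < (inner ℝ ν₂ y : ℝ) := by linarith
          have hn : ¬ (0 < (inner ℝ ν₁ y : ℝ)) := not_lt.2 h1y.le
          simp only [hD, hw₁, hw₂]
          rw [if_neg hn, if_pos h2y, zero_sub]) H
      exact key
    · -- ν₁ ≠ ±ν₂ : derive a contradiction
      exfalso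
      set t : ℝ := inner ℝ ν₁ ν₂ with htdef
      have htle : t ≤ 1 := by
        calc t ≤ ‖ν₁‖ * ‖ν₂‖ := real_inner_le_norm ν₁ ν₂
          _ = 1 := by rw [hν₁, hν₂]; norm_num
      have ht1 : t < 1 := lt_of_le_of_ne htle fun h =>
        hee ((inner_eq_one_iff_of_norm_eq_one hν₁ hν₂).1 h)
      have ht2 : -1 < t := by
        have hle : (inner ℝ ν₁ (-ν₂) : ℝ) ≤ 1 := by
          calc (inner ℝ ν₁ (-ν₂) : ℝ) ≤ ‖ν₁‖ * ‖-ν₂‖ := real_inner_le_norm ν₁ (-ν₂)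
            _ = 1 := by rw [hν₁, norm_neg, hν₂]; norm_num
        have hne : (inner ℝ ν₁ (-ν₂) : ℝ) ≠ 1 := fun h =>
          hee' ((inner_eq_one_iff_of_norm_eq_one hν₁ (by rw [norm_neg, hν₂])).1 h)
        have : (inner ℝ ν₁ (-ν₂) : ℝ) = -t := by rw [inner_neg_right]
        rw [this] at hle hne
        rcases lt_or_eq_of_le hle with h | h
        · linarith
        · exact absurd h hne
      have hcomm : (inner ℝ ν₂ ν₁ : ℝ) = t := (real_inner_comm ν₂ ν₁).symm
      -- the two sectors
      have key := sep_lemma (D := D) (a := h₁) (b := 0)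
        (A := ({y : Euc N | 0 < (inner ℝ ν₁ y : ℝ)} ∩ {y : Euc N | (inner ℝ ν₂ y : ℝ) < 0})
          ∩ ball (0:Euc N) 1)
        (B := ({y : Euc N | (inner ℝ ν₁ y : ℝ) < 0} ∩ {y : Euc N | (inner ℝ ν₂ y : ℝ) < 0})
          ∩ ball (0:Euc N) 1)
        (((isOpen_lt continuous_const hcont₁).inter (isOpen_lt hcont₂ continuous_const)).inter
          isOpen_ball)
        (inter_subset_right)
        ⟨(4:ℝ)⁻¹ • (ν₁ - ν₂), by
          refine ⟨⟨?_, ?_⟩, ?_⟩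
          · show 0 < (inner ℝ ν₁ ((4:ℝ)⁻¹ • (ν₁ - ν₂)) : ℝ)
            rw [real_inner_smul_right, inner_sub_right, hsq₁, ← htdef]
            nlinarith
          · show (inner ℝ ν₂ ((4:ℝ)⁻¹ • (ν₁ - ν₂)) : ℝ) < 0
            rw [real_inner_smul_right, inner_sub_right, hsq₂, hcomm]
            nlinarith
          · rw [mem_ball_zero_iff, norm_smul, Real.norm_eq_abs]
            have h1 : ‖ν₁ - ν₂‖ ≤ 2 := by
              calc ‖ν₁ - ν₂‖ ≤ ‖ν₁‖ + ‖ν₂‖ := norm_sub_le _ _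
                _ = 2 := by rw [hν₁, hν₂]; norm_num
            calc |(4:ℝ)⁻¹| * ‖ν₁ - ν₂‖ ≤ (4:ℝ)⁻¹ * 2 := by
                  rw [abs_of_pos (by norm_num : (0:ℝ) < (4:ℝ)⁻¹)]
                  exact mul_le_mul_of_nonneg_left h1 (by norm_num)
              _ < 1 := by norm_num⟩
        (((isOpen_lt hcont₁ continuous_const).inter (isOpen_lt hcont₂ continuous_const)).inter
          isOpen_ball)
        (inter_subset_right)
        ⟨-((4:ℝ)⁻¹ • (ν₁ + ν₂)), by
          refine ⟨⟨?_, ?_⟩, ?_⟩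
          · show (inner ℝ ν₁ (-((4:ℝ)⁻¹ • (ν₁ + ν₂))) : ℝ) < 0
            rw [inner_neg_right, real_inner_smul_right, inner_add_right, hsq₁, ← htdef]
            nlinarith
          · show (inner ℝ ν₂ (-((4:ℝ)⁻¹ • (ν₁ + ν₂))) : ℝ) < 0
            rw [inner_neg_right, real_inner_smul_right, inner_add_right, hsq₂, hcomm]
            nlinarith
          · rw [mem_ball_zero_iff, norm_neg, norm_smul, Real.norm_eq_abs]
            have h1 : ‖ν₁ + ν₂‖ ≤ 2 := by
              calc ‖ν₁ + ν₂‖ ≤ ‖ν₁‖ + ‖ν₂‖ := norm_add_le _ _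
                _ = 2 := by rw [hν₁, hν₂]; norm_num
            calc |(4:ℝ)⁻¹| * ‖ν₁ + ν₂‖ ≤ (4:ℝ)⁻¹ * 2 := by
                  rw [abs_of_pos (by norm_num : (0:ℝ) < (4:ℝ)⁻¹)]
                  exact mul_le_mul_of_nonneg_left h1 (by norm_num)
              _ < 1 := by norm_num⟩
        (fun y hy => by
          have h1y : (0:ℝ) < inner ℝ ν₁ y := hy.1.1
          have h2y : (inner ℝ ν₂ y : ℝ) < 0 := hy.1.2
          have hn : ¬ (0 < (inner ℝ ν₂ y : ℝ)) := not_lt.2 h2y.le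
          simp only [hD, hw₁, hw₂]
          rw [if_pos h1y, if_neg hn, sub_zero])
        (fun y hy => by
          have h1y : (inner ℝ ν₁ y : ℝ) < 0 := hy.1.1
          have h2y : (inner ℝ ν₂ y : ℝ) < 0 := hy.1.2
          have hn1 : ¬ (0 < (inner ℝ ν₁ y : ℝ)) := not_lt.2 h1y.le
          have hn2 : ¬ (0 < (inner ℝ ν₂ y : ℝ)) := not_lt.2 h2y.le
          simp only [hD, hw₁, hw₂]
          rw [if_neg hn1, if_neg hn2, sub_zero]) H
      exact hh₁ key
end
end

section
/- Let Ω ⊂ ℝ^N be an open set, q ∈ [1,∞) and u ∈ L^q(Ω,ℝ^d). Then the Besov q-constant B̂_{u,q}(Ω) is finite if and only if the upper infinitesimal Besov q-constant B̄_{u,q}(Ω) is finite. -/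
open MeasureTheory Metric Filter Set Topology
open scoped ENNReal NNReal

noncomputable section

lemma two_rpow_bound {d : ℕ} {q : ℝ} (hq : 0 ≤ q) (a b : Euc d) :
    (‖a - b‖₊ : ℝ≥0∞) ^ q ≤ 2 ^ q * ((‖a‖₊ : ℝ≥0∞) ^ q + (‖b‖₊ : ℝ≥0∞) ^ q) := by
  calc (‖a - b‖₊ : ℝ≥0∞) ^ q ≤ (2 * max (‖a‖₊ : ℝ≥0∞) (‖b‖₊ : ℝ≥0∞)) ^ q := by
        apply ENNReal.rpow_le_rpow _ hq
        calc (‖a - b‖₊ : ℝ≥0∞) ≤ (‖a‖₊ : ℝ≥0∞) + ‖b‖₊ := by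
              rw [← ENNReal.coe_add]; exact_mod_cast nnnorm_sub_le a b
          _ ≤ 2 * max (‖a‖₊ : ℝ≥0∞) (‖b‖₊ : ℝ≥0∞) := by
              rw [two_mul]; exact add_le_add (le_max_left _ _) (le_max_right _ _)
    _ = 2 ^ q * max (‖a‖₊ : ℝ≥0∞) (‖b‖₊ : ℝ≥0∞) ^ q := ENNReal.mul_rpow_of_nonneg _ _ hq
    _ ≤ 2 ^ q * ((‖a‖₊ : ℝ≥0∞) ^ q + (‖b‖₊ : ℝ≥0∞) ^ q) := by
        gcongr
        rcases max_cases (‖a‖₊ : ℝ≥0∞) (‖b‖₊ : ℝ≥0∞) with ⟨h, _⟩ | ⟨h, _⟩ <;> rw [h]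
        · exact le_add_right le_rfl
        · exact le_add_left le_rfl

lemma besov_step {N d : ℕ} {q : ℝ} (hq : 0 ≤ q) {Ω : Set (Euc N)} (hΩ : MeasurableSet Ω)
    {u : Euc N → Euc d} (hm : Measurable u) {δ ε : ℝ} (hδ : 0 < δ) (hδε : δ ≤ ε) :
    besovInt N d Ω u q ε ≤ besovInt N d Ω u q δ +
      (ENNReal.ofReal (ε ^ N) * ENNReal.ofReal δ)⁻¹ *
        (2 ^ q * (volume (ball (0 : Euc N) ε) * (∫⁻ x in Ω, (‖u x‖₊ : ℝ≥0∞) ^ q) +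
          volume (ball (0 : Euc N) ε) * (∫⁻ x in Ω, (‖u x‖₊ : ℝ≥0∞) ^ q))) := by
  have hε : 0 < ε := hδ.trans_le hδε
  set μ := volume.restrict Ω with hμ
  set D := ENNReal.ofReal (ε ^ N) with hD
  set Dδ := ENNReal.ofReal (δ ^ N) with hDδ
  set V := volume (ball (0 : Euc N) ε) with hV
  set A := ∫⁻ x in Ω, (‖u x‖₊ : ℝ≥0∞) ^ q with hA
  set c2 := (D * ENNReal.ofReal δ)⁻¹ with hc2
  have hDne : D * ENNReal.ofReal δ ≠ 0 := by
    have h1 : (0:ℝ) < ε ^ N := by positivity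
    exact mul_ne_zero (ENNReal.ofReal_pos.mpr h1).ne' (ENNReal.ofReal_pos.mpr hδ).ne'
  have hc2top : c2 ≠ ⊤ := ENNReal.inv_ne_top.mpr hDne
  have hVtop : V ≠ ⊤ := measure_ball_lt_top.ne
  have h2top : (2 : ℝ≥0∞) ^ q ≠ ⊤ := (ENNReal.rpow_lt_top_of_nonneg hq (by norm_num)).ne
  set g1 : Euc N → ℝ≥0∞ :=
    fun x => ∫⁻ y in Ω ∩ ball x δ, (‖u x - u y‖₊ : ℝ≥0∞) ^ q / (Dδ * (‖x - y‖₊ : ℝ≥0∞)) with hg1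
  set J : Euc N → ℝ≥0∞ := fun x => ∫⁻ y in Ω ∩ ball x ε, (‖u x - u y‖₊ : ℝ≥0∞) ^ q with hJdef
  -- measurability of g1
  have hg1m : Measurable g1 := by
    set G : Euc N × Euc N → ℝ≥0∞ := ({p : Euc N × Euc N | p.2 ∈ Ω ∧ dist p.2 p.1 < δ}).indicator
        (fun p => (‖u p.1 - u p.2‖₊ : ℝ≥0∞) ^ q / (Dδ * (‖p.1 - p.2‖₊ : ℝ≥0∞))) with hG
    have hGm : Measurable G := by
      apply Measurable.indicator
      · exact ((((hm.comp measurable_fst).sub (hm.comp measurable_snd)).nnnorm.coe_nnreal_ennreal).pow_const q).div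
          (measurable_const.mul ((measurable_fst.sub measurable_snd).nnnorm.coe_nnreal_ennreal))
      · exact (measurable_snd hΩ).inter
          (measurableSet_lt (continuous_snd.dist continuous_fst).measurable measurable_const)
    have hrw : ∀ x, g1 x = ∫⁻ y, G (x, y) ∂volume := by
      intro x
      show (∫⁻ y in Ω ∩ ball x δ, (‖u x - u y‖₊ : ℝ≥0∞) ^ q / (Dδ * (‖x - y‖₊ : ℝ≥0∞)))
        = ∫⁻ y, G (x, y) ∂volume
      rw [← lintegral_indicator (hΩ.inter measurableSet_ball)]
      refine lintegral_congr fun y => ?_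
      by_cases hy : y ∈ Ω ∩ ball x δ
      · rw [Set.indicator_of_mem hy, hG, Set.indicator_of_mem (by simpa [mem_ball] using hy)]
      · rw [Set.indicator_of_notMem hy, hG, Set.indicator_of_notMem (by simpa [mem_ball] using hy)]
    have hg1e : g1 = fun x => ∫⁻ y, G (x, y) ∂volume := funext hrw
    rw [hg1e]
    exact Measurable.lintegral_prod_right (f := fun x y => G (x, y)) hGm
  -- pointwise in x splitting
  have step1 : ∀ x, (∫⁻ y in Ω ∩ ball x ε,
      (‖u x - u y‖₊ : ℝ≥0∞) ^ q / (D * (‖x - y‖₊ : ℝ≥0∞))) ≤ g1 x + c2 * J x := by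
    intro x
    have hsub : Ω ∩ ball x ε ⊆ (Ω ∩ ball x δ) ∪ ((Ω ∩ ball x ε) \ ball x δ) := by
      intro y hy
      by_cases hyd : y ∈ ball x δ
      · exact Or.inl ⟨hy.1, hyd⟩
      · exact Or.inr ⟨hy, hyd⟩
    calc (∫⁻ y in Ω ∩ ball x ε, (‖u x - u y‖₊ : ℝ≥0∞) ^ q / (D * (‖x - y‖₊ : ℝ≥0∞)))
        ≤ ∫⁻ y in (Ω ∩ ball x δ) ∪ ((Ω ∩ ball x ε) \ ball x δ),
            (‖u x - u y‖₊ : ℝ≥0∞) ^ q / (D * (‖x - y‖₊ : ℝ≥0∞)) := lintegral_mono_set hsub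
      _ ≤ (∫⁻ y in Ω ∩ ball x δ, (‖u x - u y‖₊ : ℝ≥0∞) ^ q / (D * (‖x - y‖₊ : ℝ≥0∞)))
          + ∫⁻ y in (Ω ∩ ball x ε) \ ball x δ,
              (‖u x - u y‖₊ : ℝ≥0∞) ^ q / (D * (‖x - y‖₊ : ℝ≥0∞)) := lintegral_union_le _ _ _
      _ ≤ g1 x + c2 * J x := by
          refine add_le_add ?_ ?_
          · apply lintegral_mono
            intro y
            exact ENNReal.div_le_div le_rfl (mul_le_mul'
              (ENNReal.ofReal_le_ofReal (pow_le_pow_left₀ hδ.le hδε N)) le_rfl)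
          · calc (∫⁻ y in (Ω ∩ ball x ε) \ ball x δ,
                (‖u x - u y‖₊ : ℝ≥0∞) ^ q / (D * (‖x - y‖₊ : ℝ≥0∞)))
                ≤ ∫⁻ y in (Ω ∩ ball x ε) \ ball x δ,
                    c2 * (‖u x - u y‖₊ : ℝ≥0∞) ^ q := by
                  apply setLIntegral_mono' ((hΩ.inter measurableSet_ball).diff measurableSet_ball)
                  intro y hy
                  have hδle : ENNReal.ofReal δ ≤ (‖x - y‖₊ : ℝ≥0∞) := by
                    have h2 : δ ≤ dist y x := not_lt.mp (by simpa [mem_ball] using hy.2)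
                    rw [← enorm_eq_nnnorm, ← ofReal_norm]
                    exact ENNReal.ofReal_le_ofReal (by rwa [dist_eq_norm, norm_sub_rev] at h2)
                  rw [hc2, ← ENNReal.div_eq_inv_mul]
                  exact ENNReal.div_le_div le_rfl (mul_le_mul' le_rfl hδle)
              _ = c2 * ∫⁻ y in (Ω ∩ ball x ε) \ ball x δ, (‖u x - u y‖₊ : ℝ≥0∞) ^ q :=
                  lintegral_const_mul' _ _ hc2top
              _ ≤ c2 * J x := by
                  gcongr
                  exact lintegral_mono_set (fun y hy => hy.1)
  -- bound on ∫ J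
  have hball : ∀ z : Euc N, volume (ball z ε) = V := fun z => Measure.addHaar_ball_center volume z ε
  have hT : (∫⁻ x in Ω, ∫⁻ y in Ω ∩ ball x ε, (‖u y‖₊ : ℝ≥0∞) ^ q) ≤ A * V := by
    set G : Euc N × Euc N → ℝ≥0∞ := ({p : Euc N × Euc N | dist p.2 p.1 < ε}).indicator
        (fun p => (‖u p.2‖₊ : ℝ≥0∞) ^ q) with hG
    have hGm : Measurable G :=
      Measurable.indicator (((hm.comp measurable_snd).nnnorm.coe_nnreal_ennreal).pow_const q)
        (measurableSet_lt (continuous_snd.dist continuous_fst).measurable measurable_const)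
    have hrw : ∀ x, (∫⁻ y in Ω ∩ ball x ε, (‖u y‖₊ : ℝ≥0∞) ^ q ∂volume)
        = ∫⁻ y, G (x, y) ∂μ := by
      intro x
      rw [inter_comm Ω (ball x ε), ← Measure.restrict_restrict measurableSet_ball, ← hμ,
        ← lintegral_indicator (μ := μ) measurableSet_ball]
      refine lintegral_congr fun y => ?_
      by_cases hy : y ∈ ball x ε
      · rw [Set.indicator_of_mem hy, hG, Set.indicator_of_mem (by simpa [mem_ball] using hy)]
      · rw [Set.indicator_of_notMem hy, hG, Set.indicator_of_notMem (by simpa [mem_ball] using hy)]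
    calc (∫⁻ x in Ω, ∫⁻ y in Ω ∩ ball x ε, (‖u y‖₊ : ℝ≥0∞) ^ q)
        = ∫⁻ x, (∫⁻ y, G (x, y) ∂μ) ∂μ := lintegral_congr hrw
      _ = ∫⁻ y, (∫⁻ x, G (x, y) ∂μ) ∂μ :=
          lintegral_lintegral_swap (f := fun x y => G (x, y)) hGm.aemeasurable
      _ ≤ ∫⁻ y, (‖u y‖₊ : ℝ≥0∞) ^ q * V ∂μ := by
          apply lintegral_mono; intro y
          have hfun : ∀ x, G (x, y) = (ball y ε).indicator (fun _ => (‖u y‖₊ : ℝ≥0∞) ^ q) x := by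
            intro x
            by_cases hx : x ∈ ball y ε
            · rw [Set.indicator_of_mem hx, hG,
                Set.indicator_of_mem (by simpa [mem_ball, dist_comm] using hx)]
            · rw [Set.indicator_of_notMem hx, hG,
                Set.indicator_of_notMem (by simpa [mem_ball, dist_comm] using hx)]
          calc (∫⁻ x, G (x, y) ∂μ)
              = ∫⁻ x, (ball y ε).indicator (fun _ => (‖u y‖₊ : ℝ≥0∞) ^ q) x ∂μ :=
                lintegral_congr hfun
            _ = (‖u y‖₊ : ℝ≥0∞) ^ q * μ (ball y ε) :=
                lintegral_indicator_const measurableSet_ball _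
            _ ≤ (‖u y‖₊ : ℝ≥0∞) ^ q * V := by
                gcongr
                rw [hμ, Measure.restrict_apply measurableSet_ball, ← hball y]
                exact measure_mono inter_subset_left
      _ = A * V := lintegral_mul_const' _ _ hVtop
  have hJ : (∫⁻ x in Ω, J x) ≤ 2 ^ q * (V * A + V * A) := by
    calc (∫⁻ x in Ω, J x)
        ≤ ∫⁻ x in Ω, ∫⁻ y in Ω ∩ ball x ε,
            2 ^ q * ((‖u x‖₊ : ℝ≥0∞) ^ q + (‖u y‖₊ : ℝ≥0∞) ^ q) := by
          apply lintegral_mono; intro x; apply lintegral_mono; intro y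
          exact two_rpow_bound hq (u x) (u y)
      _ = ∫⁻ x in Ω, 2 ^ q * ∫⁻ y in Ω ∩ ball x ε,
            ((‖u x‖₊ : ℝ≥0∞) ^ q + (‖u y‖₊ : ℝ≥0∞) ^ q) := by
          apply lintegral_congr; intro x
          exact lintegral_const_mul' _ _ h2top
      _ = 2 ^ q * ∫⁻ x in Ω, ∫⁻ y in Ω ∩ ball x ε,
            ((‖u x‖₊ : ℝ≥0∞) ^ q + (‖u y‖₊ : ℝ≥0∞) ^ q) := lintegral_const_mul' _ _ h2top
      _ ≤ 2 ^ q * (V * A + V * A) := by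
          gcongr
          calc (∫⁻ x in Ω, ∫⁻ y in Ω ∩ ball x ε, ((‖u x‖₊ : ℝ≥0∞) ^ q + (‖u y‖₊ : ℝ≥0∞) ^ q))
              = ∫⁻ x in Ω, ((‖u x‖₊ : ℝ≥0∞) ^ q * volume (Ω ∩ ball x ε)
                  + ∫⁻ y in Ω ∩ ball x ε, (‖u y‖₊ : ℝ≥0∞) ^ q) := by
                apply lintegral_congr; intro x
                rw [lintegral_add_left measurable_const, setLIntegral_const]
            _ ≤ ∫⁻ x in Ω, ((‖u x‖₊ : ℝ≥0∞) ^ q * V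
                  + ∫⁻ y in Ω ∩ ball x ε, (‖u y‖₊ : ℝ≥0∞) ^ q) := by
                apply lintegral_mono; intro x
                refine add_le_add (mul_le_mul' le_rfl ?_) le_rfl
                rw [← hball x]
                exact measure_mono inter_subset_right
            _ = (∫⁻ x in Ω, (‖u x‖₊ : ℝ≥0∞) ^ q * V)
                  + ∫⁻ x in Ω, ∫⁻ y in Ω ∩ ball x ε, (‖u y‖₊ : ℝ≥0∞) ^ q :=
                lintegral_add_left (((hm.nnnorm.coe_nnreal_ennreal).pow_const q).mul_const V) _
            _ ≤ A * V + A * V := add_le_add (le_of_eq (lintegral_mul_const' _ _ hVtop)) hT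
            _ = V * A + V * A := by ring
  -- put together
  calc besovInt N d Ω u q ε
      = ∫⁻ x in Ω, ∫⁻ y in Ω ∩ ball x ε,
          (‖u x - u y‖₊ : ℝ≥0∞) ^ q / (D * (‖x - y‖₊ : ℝ≥0∞)) := rfl
    _ ≤ ∫⁻ x in Ω, (g1 x + c2 * J x) := lintegral_mono step1
    _ = (∫⁻ x in Ω, g1 x) + ∫⁻ x in Ω, c2 * J x := lintegral_add_left hg1m _
    _ = besovInt N d Ω u q δ + c2 * ∫⁻ x in Ω, J x := by
        rw [lintegral_const_mul' _ _ hc2top]; rfl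
    _ ≤ besovInt N d Ω u q δ + c2 * (2 ^ q * (V * A + V * A)) := by gcongr

lemma besovInt_congr {N d : ℕ} {q : ℝ} {Ω : Set (Euc N)}
    {u v : Euc N → Euc d} (h : u =ᵐ[volume.restrict Ω] v) (ε : ℝ) :
    besovInt N d Ω u q ε = besovInt N d Ω v q ε := by
  unfold besovInt
  refine lintegral_congr_ae ?_
  filter_upwards [h] with x hx
  refine lintegral_congr_ae ?_
  have hle : volume.restrict (Ω ∩ ball x ε) ≤ volume.restrict Ω :=
    Measure.restrict_mono inter_subset_left le_rfl
  filter_upwards [(ae_mono hle) h] with y hy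
  rw [hx, hy]

/-- Let `Ω ⊆ ℝ^N` be open, `q ∈ [1,∞)` and `u ∈ L^q(Ω, ℝ^d)`. Then the
Besov `q`-constant `B̂_{u,q}(Ω) = sup_{ε ∈ (0,1)}` of the double integral is finite if and
only if the upper infinitesimal Besov `q`-constant `B̄_{u,q}(Ω) = limsup_{ε→0+}` of the same
double integral is finite. -/
theorem besov_constant_finiteness_equiv
    {N d : ℕ} {q : ℝ} (hq : 1 ≤ q)
    {Ω : Set (Euc N)} (hΩ : IsOpen Ω) (u : Euc N → Euc d)
    (hu : MemLp u (ENNReal.ofReal q) (volume.restrict Ω)) :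
    (⨆ ε ∈ Ioo (0:ℝ) 1, besovInt N d Ω u q ε) < ⊤ ↔
      limsup (fun ε => besovInt N d Ω u q ε) (𝓝[>] (0:ℝ)) < ⊤ := by
  have hq0 : 0 ≤ q := zero_le_one.trans hq
  obtain ⟨g, hgsm, hug⟩ : ∃ g, StronglyMeasurable g ∧ u =ᵐ[volume.restrict Ω] g :=
    ⟨hu.1.mk u, hu.1.stronglyMeasurable_mk, hu.1.ae_eq_mk⟩
  have hgmeas : Measurable g := hgsm.measurable
  have hcong : ∀ ε, besovInt N d Ω u q ε = besovInt N d Ω g q ε :=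
    fun ε => besovInt_congr hug ε
  have hA : (∫⁻ x in Ω, (‖g x‖₊ : ℝ≥0∞) ^ q) < ⊤ := by
    have h1 : (∫⁻ x in Ω, (‖u x‖₊ : ℝ≥0∞) ^ q) < ⊤ := by
      have h2 := lintegral_rpow_enorm_lt_top_of_eLpNorm_lt_top (p := ENNReal.ofReal q)
        (by simp only [ne_eq, ENNReal.ofReal_eq_zero, not_le]; linarith)
        ENNReal.ofReal_ne_top hu.2
      rwa [ENNReal.toReal_ofReal hq0] at h2
    refine lt_of_le_of_lt (le_of_eq (lintegral_congr_ae ?_)) h1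
    filter_upwards [hug] with x hx
    rw [hx]
  simp only [hcong]
  constructor
  · intro h
    have hle : limsup (fun ε => besovInt N d Ω g q ε) (𝓝[>] (0:ℝ)) ≤
        ⨆ ε ∈ Ioo (0:ℝ) 1, besovInt N d Ω g q ε := by
      apply limsup_le_of_le (by isBoundedDefault)
      filter_upwards [Ioo_mem_nhdsGT_of_mem (⟨le_rfl, one_pos⟩ : (0:ℝ) ∈ Ico (0:ℝ) 1)] with ε hε
      exact le_biSup _ hε
    exact lt_of_le_of_lt hle h
  · intro h
    set F := fun ε => besovInt N d Ω g q ε with hF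
    set M := limsup F (𝓝[>] (0:ℝ)) + 1 with hM
    have hMtop : M ≠ ⊤ := ENNReal.add_ne_top.mpr ⟨h.ne, ENNReal.one_ne_top⟩
    have hev : ∀ᶠ ε in 𝓝[>] (0:ℝ), F ε < M :=
      eventually_lt_of_limsup_lt (ENNReal.lt_add_right h.ne one_ne_zero)
    obtain ⟨δ0, hδ0pos, hδ0⟩ := mem_nhdsGT_iff_exists_Ioo_subset.mp hev
    rw [mem_Ioi] at hδ0pos
    set δ := min δ0 1 / 2 with hδdef
    have hδpos : 0 < δ := by
      have : 0 < min δ0 1 := lt_min hδ0pos one_pos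
      positivity
    have hδlt : δ < δ0 := by
      have h1 : δ ≤ δ0 / 2 := by
        rw [hδdef]
        have := min_le_left δ0 1
        linarith
      linarith [half_lt_self hδ0pos]
    have hδ1 : δ < 1 := by
      have h1 : δ ≤ 1 / 2 := by
        rw [hδdef]
        have := min_le_right δ0 1
        linarith
      linarith
    have hFδ : F δ < M := hδ0 ⟨hδpos, hδlt⟩
    set A := ∫⁻ x in Ω, (‖g x‖₊ : ℝ≥0∞) ^ q with hAdef
    set V1 := volume (ball (0 : Euc N) 1) with hV1
    set C := (ENNReal.ofReal (δ ^ N) * ENNReal.ofReal δ)⁻¹ *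
        (2 ^ q * (V1 * A + V1 * A)) with hC
    have hCtop : C ≠ ⊤ := by
      have hbne : ENNReal.ofReal (δ ^ N) * ENNReal.ofReal δ ≠ 0 := by
        have h1 : (0:ℝ) < δ ^ N := by positivity
        exact mul_ne_zero (ENNReal.ofReal_pos.mpr h1).ne' (ENNReal.ofReal_pos.mpr hδpos).ne'
      have h2top : (2 : ℝ≥0∞) ^ q ≠ ⊤ := (ENNReal.rpow_lt_top_of_nonneg hq0 (by norm_num)).ne
      have hV1top : V1 ≠ ⊤ := measure_ball_lt_top.ne
      exact ENNReal.mul_ne_top (ENNReal.inv_ne_top.mpr hbne)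
        (ENNReal.mul_ne_top h2top (ENNReal.add_ne_top.mpr
          ⟨ENNReal.mul_ne_top hV1top hA.ne, ENNReal.mul_ne_top hV1top hA.ne⟩))
    have bound : ∀ ε ∈ Ioo (0:ℝ) 1, F ε ≤ M + C := by
      intro ε hε
      rcases lt_or_ge ε δ with hlt | hge
      · exact le_trans (hδ0 ⟨hε.1, hlt.trans hδlt⟩).le le_self_add
      · refine le_trans (besov_step hq0 hΩ.measurableSet hgmeas hδpos hge) ?_
        refine add_le_add hFδ.le ?_
        have hV : volume (ball (0 : Euc N) ε) ≤ V1 := measure_mono (ball_subset_ball hε.2.le)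
        refine mul_le_mul' (ENNReal.inv_le_inv.mpr (mul_le_mul'
          (ENNReal.ofReal_le_ofReal (pow_le_pow_left₀ hδpos.le hge N)) le_rfl))
          (mul_le_mul' le_rfl (add_le_add (mul_le_mul' hV le_rfl) (mul_le_mul' hV le_rfl)))
    refine lt_of_le_of_lt (iSup₂_le bound) ?_
    exact ENNReal.add_lt_top.mpr ⟨hMtop.lt_top, hCtop.lt_top⟩
end
end
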